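/- arXiv:1403.7276 — 7 statements merged into one kernel-verified Lean document; each statement's English description precedes it below -/
import Mathlib

section
/- Let G be a finite abelian group with b = |G| elements, s, n positive integers, and P a subgroup of G^{s×n}. For a matrix A = (a_{ij}) in (G^∨)^{s×n} define the Dick weight μ(A) = ∑_{i=1}^{s} ∑_{j=1}^{n} j·δ(a_{ij}) where δ(0)=0 and δ(h)=1 for h≠0. Then the weight enumerator W_{P^⊥}(x,y) = ∑_{A ∈ P^⊥} x^{M-μ(A)} y^{μ(A)}, with M = n(n+1)s/2, satisfies the MacWilliams-type identity W_{P^⊥}(x,y) = (1/|P|) ∑_{B ∈ P} ∏_{i=1}^{s} ∏_{j=1}^{n} (x^j + η(b_{ij}) y^j), where η(0) = b-1 and η(g) = -1 for g ≠ 0. -/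
open scoped Classical
open MvPolynomial

/-- The Dick weight `μ(A) = ∑_{i,j} j · δ(a_{ij})` of a matrix of characters,
where column `j` (numbered `1, …, n`) contributes `j` for each nonzero entry. -/
noncomputable def dickWeight {G : Type*} [AddCommGroup G] {s n : ℕ}
    (A : Fin s → Fin n → AddChar G ℂ) : ℕ :=
  ∑ i : Fin s, ∑ j : Fin n, (j.1 + 1) * (if A i j = 1 then 0 else 1)

/-- Orthogonality: summing a character of the matrix group over a subgroup `P`
gives `|P|` if the character annihilates `P`, and `0` otherwise. -/
private lemma char_sum_subgroup {G : Type*} [AddCommGroup G] [Fintype G] {s n : ℕ}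
    (P : AddSubgroup (Fin s → Fin n → G)) (A : Fin s → Fin n → AddChar G ℂ) :
    (∑ B : P, ∏ i : Fin s, ∏ j : Fin n, A i j ((B : Fin s → Fin n → G) i j)) =
      if ∀ B ∈ P, (∏ i : Fin s, ∏ j : Fin n, A i j (B i j)) = 1
        then (Nat.card P : ℂ) else 0 := by
  classical
  set f : (Fin s → Fin n → G) → ℂ := fun B => ∏ i : Fin s, ∏ j : Fin n, A i j (B i j) with hf
  have hmul : ∀ B C : Fin s → Fin n → G, f (B + C) = f B * f C := by
    intro B C
    simp only [hf, Pi.add_apply, AddChar.map_add_eq_mul, Finset.prod_mul_distrib]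
  split_ifs with h
  · rw [Finset.sum_congr rfl (fun B _ => h B.1 B.2)]
    simp [Nat.card_eq_fintype_card]
  · push_neg at h
    obtain ⟨B0, hB0P, hB0⟩ := h
    have key : f B0 * (∑ B : P, f B) = ∑ B : P, f B := by
      rw [Finset.mul_sum]
      refine Fintype.sum_equiv (Equiv.addLeft (⟨B0, hB0P⟩ : P)) _ _ fun B => ?_
      simpa using (hmul B0 B).symm
    have h0 : (f B0 - 1) * (∑ B : P, f B) = 0 := by
      rw [sub_mul, key, one_mul, sub_self]
    rcases mul_eq_zero.mp h0 with h1 | h1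
    · exact absurd (sub_eq_zero.mp h1) hB0
    · exact h1

/-- Expansion of one factor of the right-hand side as a sum over characters. -/
private lemma entry_expand {G : Type*} [AddCommGroup G] [Fintype G] (g : G) (m : ℕ) :
    (X 0 : MvPolynomial (Fin 2) ℂ) ^ m +
      C (if g = 0 then (Fintype.card G : ℂ) - 1 else -1) * (X 1) ^ m =
    ∑ χ : AddChar G ℂ, C (χ g) *
      (if χ = 1 then (X 0 : MvPolynomial (Fin 2) ℂ) ^ m else (X 1) ^ m) := by
  classical
  have h1 : ∀ χ : AddChar G ℂ,
      C (χ g) * (if χ = 1 then (X 0 : MvPolynomial (Fin 2) ℂ) ^ m else (X 1) ^ m)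
      = C (χ g) * (X 1) ^ m +
        (if χ = 1 then (X 0 : MvPolynomial (Fin 2) ℂ) ^ m - (X 1) ^ m else 0) := by
    intro χ
    split_ifs with h
    · subst h; simp
    · ring
  rw [Finset.sum_congr rfl fun χ _ => h1 χ, Finset.sum_add_distrib, ← Finset.sum_mul,
    ← map_sum, AddChar.sum_apply_eq_ite, Finset.sum_ite_eq' Finset.univ (1 : AddChar G ℂ),
    if_pos (Finset.mem_univ _)]
  split_ifs with hg <;> simp [map_sub, map_natCast, map_neg] <;> ring

/-- **MacWilliams-type identity for the Dick weight.**  For a subgroup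
`P ⊆ G^{s×n}` of matrices over a finite abelian group `G` with `b = |G|` elements,
the weight enumerator `W_{P^⊥}(x,y) = ∑_{A ∈ P^⊥} x^{M-μ(A)} y^{μ(A)}`
(with `M = n(n+1)s/2`) equals
`(1/|P|) ∑_{B ∈ P} ∏_{i,j} (x^j + η(b_{ij}) y^j)`, where `η(0) = b-1` and `η(g) = -1`
for `g ≠ 0`.  Here `x = X 0`, `y = X 1` in `ℂ[x,y]`. -/
theorem macwilliams_identity_dick_weight (G : Type*) [AddCommGroup G] [Fintype G]
    (b s n : ℕ) (hb : b = Fintype.card G) (hs : 0 < s) (hn : 0 < n)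
    (P : AddSubgroup (Fin s → Fin n → G)) :
    (∑ᶠ A ∈ {A : Fin s → Fin n → AddChar G ℂ |
        ∀ B ∈ P, (∏ i : Fin s, ∏ j : Fin n, A i j (B i j)) = 1},
      (X 0 : MvPolynomial (Fin 2) ℂ) ^ (n * (n + 1) * s / 2 - dickWeight A) *
        (X 1) ^ dickWeight A) =
    C ((Nat.card P : ℂ))⁻¹ *
      ∑ B : P, ∏ i : Fin s, ∏ j : Fin n,
        ((X 0 : MvPolynomial (Fin 2) ℂ) ^ (j.1 + 1) +
          C (if (B : Fin s → Fin n → G) i j = 0 then (b : ℂ) - 1 else -1) *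
            (X 1) ^ (j.1 + 1)) := by
  classical
  subst hb
  -- total weight
  have htot : (∑ i : Fin s, ∑ j : Fin n, (j.1 + 1)) = n * (n + 1) * s / 2 := by
    have hc2 : (∑ j ∈ Finset.range n, (j + 1)) * 2 = (n + 1) * n := by
      have := Finset.sum_range_id_mul_two (n + 1)
      have hshift : (∑ i ∈ Finset.range (n + 1), i) = ∑ j ∈ Finset.range n, (j + 1) := by
        rw [Finset.sum_range_succ']; simp
      rw [hshift] at this
      simpa using this
    have hfin : (∑ j : Fin n, (j.1 + 1)) = ∑ j ∈ Finset.range n, (j + 1) :=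
      Fin.sum_univ_eq_sum_range _ _
    have hmul : n * (n + 1) * s = (s * ∑ j ∈ Finset.range n, (j + 1)) * 2 := by
      rw [show (s * ∑ j ∈ Finset.range n, (j + 1)) * 2
        = ((∑ j ∈ Finset.range n, (j + 1)) * 2) * s by ring, hc2]; ring
    rw [hmul, Nat.mul_div_cancel _ two_pos]
    simp [hfin, Finset.sum_const, mul_comm]
  -- product of monomial factors as a single monomial with Dick-weight exponents
  have hT : ∀ A : Fin s → Fin n → AddChar G ℂ,
      (∏ i : Fin s, ∏ j : Fin n,
        (if A i j = 1 then (X 0 : MvPolynomial (Fin 2) ℂ) ^ (j.1 + 1)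
          else (X 1) ^ (j.1 + 1)))
      = X 0 ^ (n * (n + 1) * s / 2 - dickWeight A) * X 1 ^ dickWeight A := by
    intro A
    have hentry : ∀ i j, (if A i j = 1 then (X 0 : MvPolynomial (Fin 2) ℂ) ^ (j.1 + 1)
        else (X 1) ^ (j.1 + 1))
        = X 0 ^ ((j.1 + 1) * (if A i j = 1 then 1 else 0)) *
          X 1 ^ ((j.1 + 1) * (if A i j = 1 then 0 else 1)) := by
      intro i j
      split_ifs <;> simp
    rw [Finset.prod_congr rfl fun i _ => Finset.prod_congr rfl fun j _ => hentry i j]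
    simp only [Finset.prod_mul_distrib, Finset.prod_pow_eq_pow_sum]
    have hsum : (∑ i : Fin s, ∑ j : Fin n, (j.1 + 1) * (if A i j = 1 then 1 else 0))
        + dickWeight A = ∑ i : Fin s, ∑ j : Fin n, (j.1 + 1) := by
      unfold dickWeight
      rw [← Finset.sum_add_distrib]
      refine Finset.sum_congr rfl fun i _ => ?_
      rw [← Finset.sum_add_distrib]
      refine Finset.sum_congr rfl fun j _ => ?_
      split_ifs <;> ring
    have hE : (∑ i : Fin s, ∑ j : Fin n, (j.1 + 1) * (if A i j = 1 then 1 else 0))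
        = n * (n + 1) * s / 2 - dickWeight A := by omega
    rw [hE]
    rfl
  -- expansion of the product over one codeword B
  have step1 : ∀ B : P, (∏ i : Fin s, ∏ j : Fin n,
      ((X 0 : MvPolynomial (Fin 2) ℂ) ^ (j.1 + 1) +
        C (if (B : Fin s → Fin n → G) i j = 0 then (Fintype.card G : ℂ) - 1 else -1) *
          (X 1) ^ (j.1 + 1)))
      = ∑ A : Fin s → Fin n → AddChar G ℂ,
          C (∏ i : Fin s, ∏ j : Fin n, A i j ((B : Fin s → Fin n → G) i j)) *
            ∏ i : Fin s, ∏ j : Fin n,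
              (if A i j = 1 then (X 0 : MvPolynomial (Fin 2) ℂ) ^ (j.1 + 1)
                else (X 1) ^ (j.1 + 1)) := by
    intro B
    calc (∏ i : Fin s, ∏ j : Fin n,
        ((X 0 : MvPolynomial (Fin 2) ℂ) ^ (j.1 + 1) +
          C (if (B : Fin s → Fin n → G) i j = 0 then (Fintype.card G : ℂ) - 1 else -1) *
            (X 1) ^ (j.1 + 1)))
        = ∏ i : Fin s, ∏ j : Fin n, ∑ χ : AddChar G ℂ,
            C (χ ((B : Fin s → Fin n → G) i j)) *
              (if χ = 1 then (X 0 : MvPolynomial (Fin 2) ℂ) ^ (j.1 + 1)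
                else (X 1) ^ (j.1 + 1)) := by
          exact Finset.prod_congr rfl fun i _ => Finset.prod_congr rfl fun j _ =>
            entry_expand _ _
      _ = ∏ i : Fin s, ∑ a : Fin n → AddChar G ℂ, ∏ j : Fin n,
            C ((a j) ((B : Fin s → Fin n → G) i j)) *
              (if a j = 1 then (X 0 : MvPolynomial (Fin 2) ℂ) ^ (j.1 + 1)
                else (X 1) ^ (j.1 + 1)) :=
          Finset.prod_congr rfl fun i _ => Fintype.prod_sum _
      _ = ∑ A : Fin s → Fin n → AddChar G ℂ, ∏ i : Fin s, ∏ j : Fin n,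
            C ((A i j) ((B : Fin s → Fin n → G) i j)) *
              (if A i j = 1 then (X 0 : MvPolynomial (Fin 2) ℂ) ^ (j.1 + 1)
                else (X 1) ^ (j.1 + 1)) := Fintype.prod_sum _
      _ = _ := by
          refine Finset.sum_congr rfl fun A _ => ?_
          simp only [Finset.prod_mul_distrib, map_prod]
  -- put everything together
  rw [finsum_mem_eq_toFinset_sum, Finset.sum_congr rfl (fun B _ => step1 B), Finset.sum_comm]
  have hcard : ((Nat.card P : ℂ)) ≠ 0 := by
    have : 0 < Nat.card P := Nat.card_pos
    exact_mod_cast this.ne'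
  calc (∑ A ∈ {A : Fin s → Fin n → AddChar G ℂ |
        ∀ B ∈ P, (∏ i : Fin s, ∏ j : Fin n, A i j (B i j)) = 1}.toFinset,
        (X 0 : MvPolynomial (Fin 2) ℂ) ^ (n * (n + 1) * s / 2 - dickWeight A) *
          (X 1) ^ dickWeight A)
      = ∑ A : Fin s → Fin n → AddChar G ℂ,
          (if ∀ B ∈ P, (∏ i : Fin s, ∏ j : Fin n, A i j (B i j)) = 1
            then (X 0 : MvPolynomial (Fin 2) ℂ) ^ (n * (n + 1) * s / 2 - dickWeight A) *
              (X 1) ^ dickWeight A else 0) := by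
        rw [Set.toFinset_setOf, Finset.sum_filter]
    _ = C ((Nat.card P : ℂ))⁻¹ *
        ∑ A : Fin s → Fin n → AddChar G ℂ, ∑ B : P,
          C (∏ i : Fin s, ∏ j : Fin n, A i j ((B : Fin s → Fin n → G) i j)) *
            ∏ i : Fin s, ∏ j : Fin n,
              (if A i j = 1 then (X 0 : MvPolynomial (Fin 2) ℂ) ^ (j.1 + 1)
                else (X 1) ^ (j.1 + 1)) := by
        rw [Finset.mul_sum]
        refine Finset.sum_congr rfl fun A _ => ?_
        rw [← Finset.sum_mul, ← map_sum, char_sum_subgroup, hT A]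
        split_ifs with h
        · rw [← mul_assoc, ← map_mul, inv_mul_cancel₀ hcard, map_one, one_mul]
        · simp
end

section
/- Let G be a finite abelian group with b elements and P ⊆ ℤ_b^{s×n} a subgroup. Define WAFOM(P) = ∑_{A ∈ P^⊥ \ {O}} b^{-μ(A)}, where μ is the Dick weight. Then WAFOM(P) = -1 + (1/|P|) ∑_{B ∈ P} ∏_{i=1}^{s} ∏_{j=1}^{n} (1 + η(b_{ij}) b^{-j}), where η(0) = b-1 and η(g) = -1 for g ≠ 0. -/
open scoped Classical
open Complex

/-- The Dick weight `μ(A) = ∑_{i,j} j · δ(a_{ij})` of a matrix over `ℤ_b`,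
where column `j` (numbered `1, …, n`) contributes `j` for each nonzero entry. -/
def dickWeightZMod {b s n : ℕ} (A : Fin s → Fin n → ZMod b) : ℕ :=
  ∑ i : Fin s, ∑ j : Fin n, (j.1 + 1) * (if A i j = 0 then 0 else 1)

/-- The pairing `h • g = exp(2πi·hg/b)` on `ℤ_b`, extended componentwise
(multiplicatively) to matrices. -/
noncomputable def zmodMatrixPairing {b s n : ℕ} (A B : Fin s → Fin n → ZMod b) : ℂ :=
  ∏ i : Fin s, ∏ j : Fin n,
    Complex.exp (2 * Real.pi * I * ((A i j).val * (B i j).val) / b)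

noncomputable def zetab (b : ℕ) : ℂ := Complex.exp (2 * Real.pi * I / b)

section
variable {b : ℕ} [NeZero b]

lemma zetab_pow_b : zetab b ^ b = 1 :=
  ((Complex.isPrimitiveRoot_exp b (NeZero.ne b)).pow_eq_one_iff_dvd b).2 dvd_rfl

lemma exp_eq_zetab (k : ℕ) :
    Complex.exp (2 * Real.pi * I * k / b) = zetab b ^ k := by
  rw [zetab, ← Complex.exp_nat_mul]
  congr 1
  ring

lemma zetab_pow_mod (k : ℕ) : zetab b ^ (k % b) = zetab b ^ k := by
  conv_rhs => rw [← Nat.div_add_mod k b]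
  rw [pow_add, pow_mul, zetab_pow_b, one_pow, one_mul]

lemma zetab_pow_congr {k l : ℕ} (h : k ≡ l [MOD b]) : zetab b ^ k = zetab b ^ l := by
  rw [← zetab_pow_mod k, ← zetab_pow_mod l, h]

noncomputable def zmodFinEquiv (b : ℕ) [NeZero b] : Fin b ≃ ZMod b where
  toFun i := ((i : ℕ) : ZMod b)
  invFun a := ⟨a.val, ZMod.val_lt a⟩
  left_inv i := by ext; simp [ZMod.val_cast_of_lt i.isLt]
  right_inv a := by simp [ZMod.natCast_rightInverse a]

lemma zmod_char_sum (g : ZMod b) :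
    ∑ a : ZMod b, zetab b ^ (a.val * g.val) = if g = 0 then (b : ℂ) else 0 := by
  have hrw : ∀ a : ZMod b, zetab b ^ (a.val * g.val) = (zetab b ^ g.val) ^ a.val := by
    intro a; rw [← pow_mul, mul_comm]
  have hsum : ∑ a : ZMod b, zetab b ^ (a.val * g.val)
      = ∑ i ∈ Finset.range b, (zetab b ^ g.val) ^ i := by
    simp_rw [hrw]
    rw [← Equiv.sum_comp (zmodFinEquiv b) (fun a : ZMod b => (zetab b ^ g.val) ^ a.val),
      ← Fin.sum_univ_eq_sum_range]
    refine Finset.sum_congr rfl fun i _ => ?_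
    simp [zmodFinEquiv, ZMod.val_cast_of_lt i.isLt]
  rw [hsum]
  split_ifs with hg
  · simp [hg, ZMod.val_zero]
  · have hprim : IsPrimitiveRoot (zetab b) b := Complex.isPrimitiveRoot_exp b (NeZero.ne b)
    have hne : zetab b ^ g.val ≠ 1 := by
      simp only [ne_eq, hprim.pow_eq_one_iff_dvd]
      exact Nat.not_dvd_of_pos_of_lt (Nat.pos_of_ne_zero (fun h => hg ((ZMod.val_eq_zero g).1 h)))
        (ZMod.val_lt g)
    rw [geom_sum_eq hne, ← pow_mul, mul_comm g.val b, pow_mul, zetab_pow_b, one_pow, sub_self,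
      zero_div]

section
variable {b s n : ℕ} [NeZero b]

lemma pairing_eq (A B : Fin s → Fin n → ZMod b) :
    zmodMatrixPairing A B = ∏ i : Fin s, ∏ j : Fin n,
      zetab b ^ ((A i j).val * (B i j).val) := by
  unfold zmodMatrixPairing
  refine Finset.prod_congr rfl fun i _ => Finset.prod_congr rfl fun j _ => ?_
  rw [show ((((A i j).val : ℂ)) * ((B i j).val : ℂ)) = (((A i j).val * (B i j).val : ℕ) : ℂ) by
    push_cast; ring, exp_eq_zetab]

lemma pairing_add (A B C : Fin s → Fin n → ZMod b) :
    zmodMatrixPairing A (B + C) = zmodMatrixPairing A B * zmodMatrixPairing A C := by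
  simp only [pairing_eq, ← Finset.prod_mul_distrib]
  refine Finset.prod_congr rfl fun i _ => Finset.prod_congr rfl fun j _ => ?_
  rw [← pow_add]
  apply zetab_pow_congr
  have h1 : (B i j + C i j).val ≡ (B i j).val + (C i j).val [MOD b] := by
    rw [ZMod.val_add]; exact Nat.mod_modEq _ b
  calc (A i j).val * ((B + C) i j).val ≡ (A i j).val * ((B i j).val + (C i j).val) [MOD b] :=
        h1.mul_left _
    _ = (A i j).val * (B i j).val + (A i j).val * (C i j).val := by ring

lemma pairing_zero_left (B : Fin s → Fin n → ZMod b) :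
    zmodMatrixPairing (0 : Fin s → Fin n → ZMod b) B = 1 := by
  simp [pairing_eq, ZMod.val_zero]

lemma sum_pairing (P : AddSubgroup (Fin s → Fin n → ZMod b)) (A : Fin s → Fin n → ZMod b) :
    ∑ B : P, zmodMatrixPairing A B =
      if (∀ B ∈ P, zmodMatrixPairing A B = 1) then (Fintype.card P : ℂ) else 0 := by
  split_ifs with h
  · rw [Finset.sum_congr rfl fun (B : P) _ => h B B.2]
    simp
  · push_neg at h
    obtain ⟨B₀, hB₀, hne⟩ := h
    have key : zmodMatrixPairing A B₀ * ∑ B : P, zmodMatrixPairing A B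
        = ∑ B : P, zmodMatrixPairing A B := by
      rw [Finset.mul_sum]
      calc ∑ B : P, zmodMatrixPairing A B₀ * zmodMatrixPairing A ↑B
          = ∑ B : P, zmodMatrixPairing A ↑((Equiv.addLeft (⟨B₀, hB₀⟩ : P)) B) := by
            refine Finset.sum_congr rfl fun B _ => ?_
            rw [Equiv.coe_addLeft, AddSubgroup.coe_add, pairing_add]
        _ = ∑ B : P, zmodMatrixPairing A ↑B :=
            Equiv.sum_comp (Equiv.addLeft (⟨B₀, hB₀⟩ : P))
              (fun B : P => zmodMatrixPairing A ↑B)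
    have h0 : (zmodMatrixPairing A B₀ - 1) * ∑ B : P, zmodMatrixPairing A B = 0 := by
      rw [sub_mul, one_mul, key, sub_self]
    rcases mul_eq_zero.1 h0 with h | h
    · exact absurd (sub_eq_zero.1 h) hne
    · exact h

lemma wafomInnerSum (g : ZMod b) (m : ℕ) :
    ∑ a : ZMod b, zetab b ^ (a.val * g.val) * ((b : ℂ) ^ (m * (if a = 0 then 0 else 1)))⁻¹
      = 1 + (if g = 0 then (b : ℂ) - 1 else -1) * ((b : ℂ) ^ m)⁻¹ := by
  rw [← Finset.add_sum_erase _ _ (Finset.mem_univ (0 : ZMod b))]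
  have h0 : zetab b ^ ((0 : ZMod b).val * g.val) *
      ((b : ℂ) ^ (m * (if (0 : ZMod b) = 0 then 0 else 1)))⁻¹ = 1 := by
    simp [ZMod.val_zero]
  rw [h0]
  congr 1
  have hterm : ∀ a ∈ Finset.univ.erase (0 : ZMod b),
      zetab b ^ (a.val * g.val) * ((b : ℂ) ^ (m * (if a = 0 then 0 else 1)))⁻¹
        = zetab b ^ (a.val * g.val) * ((b : ℂ) ^ m)⁻¹ := by
    intro a ha
    rw [if_neg (Finset.mem_erase.1 ha).1, mul_one]
  rw [Finset.sum_congr rfl hterm, ← Finset.sum_mul]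
  congr 1
  rw [Finset.sum_erase_eq_sub (Finset.mem_univ (0 : ZMod b)), zmod_char_sum]
  simp only [ZMod.val_zero, zero_mul, pow_zero]
  split_ifs <;> ring

lemma expansion (B : Fin s → Fin n → ZMod b) :
    ∑ A : Fin s → Fin n → ZMod b,
        zmodMatrixPairing A B * ((b : ℂ) ^ dickWeightZMod A)⁻¹
      = ∏ i : Fin s, ∏ j : Fin n,
          (1 + (if B i j = 0 then (b : ℂ) - 1 else -1) * ((b : ℂ) ^ (j.1 + 1))⁻¹) := by
  set F : Fin s × Fin n → ZMod b → ℂ := fun p a =>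
    zetab b ^ (a.val * (B p.1 p.2).val) *
      ((b : ℂ) ^ ((p.2.1 + 1) * (if a = 0 then 0 else 1)))⁻¹ with hF
  have hterm : ∀ A : Fin s → Fin n → ZMod b,
      zmodMatrixPairing A B * ((b : ℂ) ^ dickWeightZMod A)⁻¹
        = ∏ p : Fin s × Fin n, F p (A p.1 p.2) := by
    intro A
    have hpow : ((b : ℂ) ^ dickWeightZMod A)
        = ∏ i : Fin s, ∏ j : Fin n,
            (b : ℂ) ^ ((j.1 + 1) * (if A i j = 0 then 0 else 1)) := by
      rw [dickWeightZMod, ← Finset.prod_pow_eq_pow_sum]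
      exact Finset.prod_congr rfl fun i _ => (Finset.prod_pow_eq_pow_sum _ _ _).symm
    rw [pairing_eq, hpow]
    simp only [← Finset.prod_inv_distrib, ← Finset.prod_mul_distrib]
    rw [Fintype.prod_prod_type (f := fun p : Fin s × Fin n => F p (A p.1 p.2))]
  calc ∑ A : Fin s → Fin n → ZMod b,
        zmodMatrixPairing A B * ((b : ℂ) ^ dickWeightZMod A)⁻¹
      = ∑ A : Fin s → Fin n → ZMod b, ∏ p : Fin s × Fin n, F p (A p.1 p.2) :=
        Finset.sum_congr rfl fun A _ => hterm A
    _ = ∑ g : Fin s × Fin n → ZMod b, ∏ p : Fin s × Fin n, F p (g p) := by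
        rw [← Equiv.sum_comp (Equiv.curry (Fin s) (Fin n) (ZMod b))
          (fun A : Fin s → Fin n → ZMod b => ∏ p : Fin s × Fin n, F p (A p.1 p.2))]
        exact Finset.sum_congr rfl fun g _ => Finset.prod_congr rfl fun p _ => by
          rfl
    _ = ∏ p : Fin s × Fin n, ∑ a : ZMod b, F p a := (Fintype.prod_sum F).symm
    _ = ∏ i : Fin s, ∏ j : Fin n,
          (1 + (if B i j = 0 then (b : ℂ) - 1 else -1) * ((b : ℂ) ^ (j.1 + 1))⁻¹) := by
        rw [Fintype.prod_prod_type]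
        exact Finset.prod_congr rfl fun i _ => Finset.prod_congr rfl fun j _ =>
          wafomInnerSum (B i j) (j.1 + 1)

end
end

/-- **Inversion formula for WAFOM.** For a subgroup `P ⊆ ℤ_b^{s×n}`,
`WAFOM(P) = ∑_{A ∈ P^⊥ \ {O}} b^{-μ(A)}` equals
`-1 + (1/|P|) ∑_{B ∈ P} ∏_{i,j} (1 + η(b_{ij}) b^{-j})`, where `η(0) = b-1` and
`η(g) = -1` for `g ≠ 0`. -/
theorem wafom_inversion_formula (b s n : ℕ) [NeZero b] (hb : 2 ≤ b)
    (hs : 0 < s) (hn : 0 < n) (P : AddSubgroup (Fin s → Fin n → ZMod b)) :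
    (∑ᶠ A ∈ {A : Fin s → Fin n → ZMod b |
        (∀ B ∈ P, zmodMatrixPairing A B = 1) ∧ A ≠ 0},
      ((b : ℝ) ^ dickWeightZMod A)⁻¹) =
    -1 + (Nat.card P : ℝ)⁻¹ *
      ∑ B : P, ∏ i : Fin s, ∏ j : Fin n,
        (1 + (if (B : Fin s → Fin n → ZMod b) i j = 0 then (b : ℝ) - 1 else -1) *
          ((b : ℝ) ^ (j.1 + 1))⁻¹) := by
  classical
  set Sfin : Finset (Fin s → Fin n → ZMod b) :=
    Finset.univ.filter (fun A => (∀ B ∈ P, zmodMatrixPairing A B = 1) ∧ A ≠ 0) with hSfin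
  set Tfin : Finset (Fin s → Fin n → ZMod b) :=
    Finset.univ.filter (fun A => ∀ B ∈ P, zmodMatrixPairing A B = 1) with hTfin
  have hset : {A : Fin s → Fin n → ZMod b |
      (∀ B ∈ P, zmodMatrixPairing A B = 1) ∧ A ≠ 0} = ↑Sfin := by
    ext A; simp [hSfin]
  rw [hset, finsum_mem_coe_finset]
  -- complex identity
  have hC : ∑ B : P, ∏ i : Fin s, ∏ j : Fin n,
        (1 + (if (B : Fin s → Fin n → ZMod b) i j = 0 then (b : ℂ) - 1 else -1) *
          ((b : ℂ) ^ (j.1 + 1))⁻¹)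
      = (Fintype.card P : ℂ) * ∑ A ∈ Tfin, ((b : ℂ) ^ dickWeightZMod A)⁻¹ := by
    simp_rw [← expansion]
    rw [Finset.sum_comm]
    simp_rw [← Finset.sum_mul, sum_pairing P, ite_mul, zero_mul]
    rw [← Finset.sum_filter, Finset.mul_sum]
  have h0T : (0 : Fin s → Fin n → ZMod b) ∈ Tfin := by
    simp [hTfin, pairing_zero_left]
  have hμ0 : dickWeightZMod (0 : Fin s → Fin n → ZMod b) = 0 := by
    simp [dickWeightZMod]
  have hTS : Tfin.erase 0 = Sfin := by
    ext A
    simp only [Finset.mem_erase, Finset.mem_filter, Finset.mem_univ, true_and, hSfin, hTfin]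
    tauto
  have hsplit : ∑ A ∈ Tfin, ((b : ℂ) ^ dickWeightZMod A)⁻¹
      = 1 + ∑ A ∈ Sfin, ((b : ℂ) ^ dickWeightZMod A)⁻¹ := by
    rw [← Finset.add_sum_erase _ _ h0T, hTS, hμ0, pow_zero, inv_one]
  have hcard : (Nat.card P : ℂ) = (Fintype.card P : ℂ) := by
    rw [Nat.card_eq_fintype_card]
  have hcard0 : (Fintype.card P : ℂ) ≠ 0 := by
    exact_mod_cast Fintype.card_ne_zero
  -- pass to ℂ
  apply Complex.ofReal_injective
  push_cast [apply_ite Complex.ofReal]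
  rw [hcard, hC, hsplit, inv_mul_cancel_left₀ hcard0]
  ring
end

section
/- Let b ≥ 2 and s ≥ 1 be integers and define S_s(m) as the coefficient of x^m in the formal power series ∏_{k=1}^∞ (1 + (b-1)x^k)^s, and vol_s(M) = ∑_{m=0}^M S_s(m). Then for every positive integer M, vol_s(M) ≤ exp(2√((b-1)·s·M)). -/
open Polynomial

/-- `S_s(m)`: the coefficient of `x^m` in `∏_{k=1}^∞ (1 + (b-1)x^k)^s`
(equivalently, truncating the product at `k = m`, which does not affect
the coefficient of `x^m`). -/
noncomputable def Ssb (b s m : ℕ) : ℕ :=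
  ((∏ k ∈ Finset.range m, (1 + C (b - 1) * X ^ (k + 1) : Polynomial ℕ)) ^ s).coeff m

/-- `vol_s(M) = ∑_{m=0}^M S_s(m)`. -/
noncomputable def volsb (b s M : ℕ) : ℕ := ∑ m ∈ Finset.range (M + 1), Ssb b s m

/-- property: coeff 0 = 1 and coeffs 1..m vanish -/
def lowTriv (m : ℕ) (q : ℕ[X]) : Prop := q.coeff 0 = 1 ∧ ∀ j, 0 < j → j ≤ m → q.coeff j = 0

lemma lowTriv_one (m : ℕ) : lowTriv m 1 := by
  constructor
  · simp
  · intro j hj _; simp [Polynomial.coeff_one]; omega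

lemma lowTriv_mul {m : ℕ} {q₁ q₂ : ℕ[X]} (h₁ : lowTriv m q₁) (h₂ : lowTriv m q₂) :
    lowTriv m (q₁ * q₂) := by
  obtain ⟨h10, h1⟩ := h₁
  obtain ⟨h20, h2⟩ := h₂
  constructor
  · simp [Polynomial.mul_coeff_zero, h10, h20]
  · intro j hj hjm
    rw [Polynomial.coeff_mul]
    apply Finset.sum_eq_zero
    rintro ⟨i, k⟩ hik
    simp only [Finset.HasAntidiagonal.mem_antidiagonal] at hik
    rcases Nat.eq_zero_or_pos i with hi | hi
    · subst hi
      rw [h2 k (by omega) (by omega), mul_zero]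
    · rw [h1 i hi (by omega), zero_mul]

lemma lowTriv_factor {m n : ℕ} (c : ℕ) (h : m < n) : lowTriv m (1 + C c * X ^ n) := by
  constructor
  · simp [Polynomial.coeff_X_pow]
    intro h'; omega
  · intro j hj hjm
    simp [Polynomial.coeff_one, Polynomial.coeff_X_pow]
    constructor
    · omega
    · intro h'; omega

lemma coeff_mul_lowTriv {m : ℕ} (p : ℕ[X]) {q : ℕ[X]} (hq : lowTriv m q) :
    (p * q).coeff m = p.coeff m := by
  rw [Polynomial.coeff_mul, Finset.sum_eq_single (m, 0)]
  · simp [hq.1]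
  · rintro ⟨i, j⟩ hij hne
    simp only [Finset.HasAntidiagonal.mem_antidiagonal] at hij
    have hj : 0 < j := by
      rcases Nat.eq_zero_or_pos j with h | h
      · exact absurd (by subst h; simpa using hij : (i,j) = (m,0)) hne
      · exact h
    rw [hq.2 j hj (by omega), mul_zero]
  · intro h; simp at h

lemma coeff_trunc (b s m M : ℕ) (hm : m ≤ M) :
    ((∏ k ∈ Finset.range M, (1 + C (b - 1) * X ^ (k + 1) : ℕ[X])) ^ s).coeff m = Ssb b s m := by
  rw [← Finset.prod_range_mul_prod_Ico _ hm, mul_pow]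
  rw [Ssb]
  apply coeff_mul_lowTriv
  have hR : lowTriv m (∏ k ∈ Finset.Ico m M, (1 + C (b - 1) * X ^ (k + 1) : ℕ[X])) := by
    apply Finset.prod_induction _ (lowTriv m) (fun _ _ => lowTriv_mul) (lowTriv_one m)
    intro k hk
    exact lowTriv_factor _ (by simp [Finset.mem_Ico] at hk; omega)
  induction s with
  | zero => simpa using lowTriv_one m
  | succ n ih => rw [pow_succ]; exact lowTriv_mul ih hR

-- partial sum of nonneg coefficients is ≤ eval
lemma partial_sum_le_eval (p : ℕ[X]) (x : ℝ) (hx : 0 ≤ x) (N : ℕ) :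
    ∑ m ∈ Finset.range N, (p.coeff m : ℝ) * x ^ m ≤ (p.map (Nat.castRingHom ℝ)).eval x := by
  set q := p.map (Nat.castRingHom ℝ) with hq
  have hdeg : q.natDegree < max N (q.natDegree + 1) := by omega
  rw [Polynomial.eval_eq_sum_range' hdeg]
  have hsub : Finset.range N ⊆ Finset.range (max N (q.natDegree + 1)) :=
    Finset.range_subset_range.mpr (le_max_left _ _)
  have : ∀ m ∈ Finset.range N, (p.coeff m : ℝ) * x ^ m = q.coeff m * x ^ m := by
    intro m _; rw [hq, Polynomial.coeff_map]; norm_num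
  rw [Finset.sum_congr rfl this]
  apply Finset.sum_le_sum_of_subset_of_nonneg hsub
  intro i _ _
  have : (0:ℝ) ≤ q.coeff i := by rw [hq, Polynomial.coeff_map]; simp
  positivity

lemma eval_prod_le (c : ℝ) (hc : 0 ≤ c) (x : ℝ) (hx0 : 0 ≤ x) (hx1 : x < 1) (M : ℕ) :
    ∏ k ∈ Finset.range M, (1 + c * x ^ (k + 1)) ≤ Real.exp (c * (x / (1 - x))) := by
  have h1 : ∏ k ∈ Finset.range M, (1 + c * x ^ (k + 1))
      ≤ ∏ k ∈ Finset.range M, Real.exp (c * x ^ (k + 1)) := by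
    apply Finset.prod_le_prod
    · intro k _; positivity
    · intro k _; have := Real.add_one_le_exp (c * x ^ (k + 1)); linarith
  rw [← Real.exp_sum] at h1
  apply h1.trans
  apply Real.exp_le_exp.mpr
  rw [← Finset.mul_sum]
  apply mul_le_mul_of_nonneg_left _ hc
  -- ∑ x^{k+1} ≤ x/(1-x)
  have hgeom : ∑ k ∈ Finset.range M, x ^ (k + 1) = x * ∑ k ∈ Finset.range M, x ^ k := by
    rw [Finset.mul_sum]; exact Finset.sum_congr rfl fun k _ => by ring
  rw [hgeom, div_eq_mul_one_div]
  apply mul_le_mul_of_nonneg_left _ hx0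
  have hne : x ≠ 1 := ne_of_lt hx1
  rw [geom_sum_eq hne]
  have heq : (x ^ M - 1) / (x - 1) = (1 - x ^ M) / (1 - x) := by
    rw [← neg_div_neg_eq]; ring_nf
  rw [heq]
  have hxM : 0 ≤ x ^ M := by positivity
  gcongr
  · linarith

set_option maxHeartbeats 1000000 in
/-- Bound on the volume of the ball for the Dick weight:
`vol_s(M) ≤ exp(2√((b-1)sM))` for integers `b ≥ 2`, `s ≥ 1` and `M ≥ 1`. -/
theorem volsb_le_exp (b s M : ℕ) (hb : 2 ≤ b) (hs : 1 ≤ s) (hM : 0 < M) :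
    (volsb b s M : ℝ) ≤ Real.exp (2 * Real.sqrt ((b - 1) * s * M)) := by
  set c : ℝ := (b : ℝ) - 1 with hc_def
  have hc : 1 ≤ c := by
    have h2b : (2:ℝ) ≤ (b:ℝ) := by exact_mod_cast hb
    rw [hc_def]; linarith
  have hc0 : 0 ≤ c := by linarith
  have hM0 : (0:ℝ) < M := by exact_mod_cast hM
  have hs0 : (0:ℝ) < s := by exact_mod_cast hs
  set t : ℝ := Real.sqrt (c * s / M) with ht_def
  have ht : 0 < t := Real.sqrt_pos.mpr (by positivity)
  set x : ℝ := Real.exp (-t) with hx_def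
  have hx0 : 0 < x := Real.exp_pos _
  have hx1 : x < 1 := by
    rw [hx_def, Real.exp_lt_one_iff]; linarith
  have hxe : x * Real.exp t = 1 := by rw [hx_def, ← Real.exp_add]; simp
  -- Step 1: vol * x^M ≤ ∑ S m x^m
  have step1 : (volsb b s M : ℝ) * x ^ M ≤
      ∑ m ∈ Finset.range (M + 1), (Ssb b s m : ℝ) * x ^ m := by
    rw [volsb]
    push_cast
    rw [Finset.sum_mul]
    apply Finset.sum_le_sum
    intro m hm
    simp only [Finset.mem_range] at hm
    have : x ^ M ≤ x ^ m := pow_le_pow_of_le_one hx0.le hx1.le (by omega)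
    have hS : (0:ℝ) ≤ (Ssb b s m : ℝ) := by positivity
    exact mul_le_mul_of_nonneg_left this hS
  -- Step 2
  set P : ℕ[X] := ∏ k ∈ Finset.range M, (1 + C (b - 1) * X ^ (k + 1)) with hP
  have step2 : ∑ m ∈ Finset.range (M + 1), (Ssb b s m : ℝ) * x ^ m ≤
      ((P ^ s).map (Nat.castRingHom ℝ)).eval x := by
    have := partial_sum_le_eval (P ^ s) x hx0.le (M + 1)
    refine le_trans (le_of_eq ?_) this
    apply Finset.sum_congr rfl
    intro m hm
    simp only [Finset.mem_range] at hm
    rw [hP, coeff_trunc b s m M (by omega)]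
  -- Step 3: eval formula
  have hmap : ((P ^ s).map (Nat.castRingHom ℝ)).eval x =
      (∏ k ∈ Finset.range M, (1 + c * x ^ (k + 1))) ^ s := by
    rw [hP]
    simp only [Polynomial.map_pow, Polynomial.map_prod, Polynomial.map_add,
      Polynomial.map_one, Polynomial.map_mul, Polynomial.map_C, Polynomial.map_pow,
      Polynomial.map_X, Polynomial.eval_pow, Polynomial.eval_prod, Polynomial.eval_add,
      Polynomial.eval_one, Polynomial.eval_mul, Polynomial.eval_C, Polynomial.eval_X]
    have : ((Nat.castRingHom ℝ) (b - 1) : ℝ) = c := by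
      simp [hc_def]
      rw [Nat.cast_sub (by omega)]
      simp
    rw [this]
  -- Step 4
  have step4 : (∏ k ∈ Finset.range M, (1 + c * x ^ (k + 1))) ^ s ≤
      Real.exp (s * (c * (1 / t))) := by
    have h1 := eval_prod_le c hc0 x hx0.le hx1 M
    have hprodnn : 0 ≤ ∏ k ∈ Finset.range M, (1 + c * x ^ (k + 1)) := by
      apply Finset.prod_nonneg; intro k _; positivity
    calc (∏ k ∈ Finset.range M, (1 + c * x ^ (k + 1))) ^ s
        ≤ (Real.exp (c * (x / (1 - x)))) ^ s := pow_le_pow_left₀ hprodnn h1 s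
      _ = Real.exp (s * (c * (x / (1 - x)))) := by rw [← Real.exp_nat_mul]
      _ ≤ Real.exp (s * (c * (1 / t))) := by
          apply Real.exp_le_exp.mpr
          have hxt : x / (1 - x) ≤ 1 / t := by
            rw [div_le_div_iff₀ (by linarith) ht]
            have h2 := Real.add_one_le_exp t
            nlinarith [mul_le_mul_of_nonneg_left h2 hx0.le]
          have : c * (x / (1 - x)) ≤ c * (1 / t) := mul_le_mul_of_nonneg_left hxt hc0
          exact mul_le_mul_of_nonneg_left this hs0.le
  -- combine
  have hV : (volsb b s M : ℝ) * x ^ M ≤ Real.exp (s * (c * (1 / t))) :=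
    step1.trans (step2.trans (le_of_eq hmap |>.trans step4))
  have hxM : x ^ M = Real.exp ((M : ℝ) * (-t)) := by
    rw [hx_def, ← Real.exp_nat_mul]
  rw [hxM] at hV
  have hfin : (volsb b s M : ℝ) ≤ Real.exp (s * (c * (1 / t)) - (M : ℝ) * (-t)) := by
    rw [Real.exp_sub]
    exact (le_div_iff₀ (Real.exp_pos _)).mpr hV
  refine hfin.trans (le_of_eq ?_)
  congr 1
  -- arithmetic: s*(c*(1/t)) + M*t = 2√(c s M)
  have hA2 : Real.sqrt (c * s) ^ 2 = c * s := Real.sq_sqrt (by positivity)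
  have hB2 : Real.sqrt (M : ℝ) ^ 2 = (M : ℝ) := Real.sq_sqrt (by positivity)
  have hA0 : 0 < Real.sqrt (c * s) := Real.sqrt_pos.mpr (by positivity)
  have hB0 : 0 < Real.sqrt (M : ℝ) := Real.sqrt_pos.mpr hM0
  have h1 : t = Real.sqrt (c * s) / Real.sqrt (M : ℝ) := by
    rw [ht_def, Real.sqrt_div (by positivity)]
  have h2 : Real.sqrt (c * ↑s * ↑M) = Real.sqrt (c * s) * Real.sqrt (M : ℝ) := by
    rw [Real.sqrt_mul (by positivity)]
  rw [h1, h2]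
  set A := Real.sqrt (c * s)
  set B := Real.sqrt (M : ℝ)
  field_simp
  nlinarith [hA2, hB2, hA0, hB0]
end

section
/- Let b ≥ 2, s ≥ 1 be integers and S_s(m) the coefficient of x^m in ∏_{k=1}^∞ (1 + (b-1)x^k)^s. Then for every positive integer M, S_s(M) ≤ exp(2√((b-1)·s·M)). -/
open Polynomial

lemma coeff_mul_pow_le_eval (p : Polynomial ℝ) (hp : ∀ i, 0 ≤ p.coeff i)
    {x : ℝ} (hx : 0 ≤ x) (n : ℕ) : p.coeff n * x ^ n ≤ p.eval x := by
  rcases le_or_gt n p.natDegree with h | h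
  · rw [Polynomial.eval_eq_sum_range]
    exact Finset.single_le_sum (f := fun i => p.coeff i * x ^ i)
      (fun i _ => mul_nonneg (hp i) (pow_nonneg hx i))
      (Finset.mem_range.2 (Nat.lt_succ_of_le h))
  · rw [Polynomial.coeff_eq_zero_of_natDegree_lt h, zero_mul,
      Polynomial.eval_eq_sum_range]
    exact Finset.sum_nonneg fun i _ => mul_nonneg (hp i) (pow_nonneg hx i)

/-- Bound on the sphere size for the Dick weight:
`S_s(M) ≤ exp(2√((b-1)sM))` for integers `b ≥ 2`, `s ≥ 1` and `M ≥ 1`. -/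
theorem Ssb_le_exp (b s M : ℕ) (hb : 2 ≤ b) (hs : 1 ≤ s) (hM : 0 < M) :
    (Ssb b s M : ℝ) ≤ Real.exp (2 * Real.sqrt ((b - 1) * s * M)) := by
  set c : ℕ := b - 1 with hc
  have hc1 : 1 ≤ c := by omega
  have hcast : ((b : ℝ) - 1) = (c : ℝ) := by
    rw [hc, Nat.cast_sub (by omega : 1 ≤ b), Nat.cast_one]
  rw [hcast]
  set A : ℝ := Real.sqrt ((c : ℝ) * s * M) with hA
  have hprodpos : (0 : ℝ) < (c : ℝ) * s * M := by
    have : (0:ℝ) < (c:ℝ) := by exact_mod_cast hc1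
    have hs' : (0:ℝ) < (s:ℝ) := by exact_mod_cast hs
    have hM' : (0:ℝ) < (M:ℝ) := by exact_mod_cast hM
    positivity
  have hApos : 0 < A := Real.sqrt_pos.2 hprodpos
  have hA2 : A * A = (c : ℝ) * s * M := Real.mul_self_sqrt hprodpos.le
  have hMpos : (0 : ℝ) < (M : ℝ) := by exact_mod_cast hM
  set t : ℝ := A / M with ht
  have htpos : 0 < t := div_pos hApos hMpos
  set x : ℝ := Real.exp (-t) with hxdef
  have hx0 : 0 < x := Real.exp_pos _
  have hx1 : x < 1 := Real.exp_lt_one_iff.2 (by linarith)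
  -- Step 1: S * x^M ≤ (∏ (1 + c x^(k+1)))^s
  have key : (Ssb b s M : ℝ) * x ^ M ≤
      (∏ k ∈ Finset.range M, (1 + (c : ℝ) * x ^ (k + 1))) ^ s := by
    set P : Polynomial ℝ :=
      (∏ k ∈ Finset.range M, (1 + C (c : ℝ) * X ^ (k + 1))) ^ s with hP
    have hmap : P = ((∏ k ∈ Finset.range M,
        (1 + C (c : ℕ) * X ^ (k + 1) : Polynomial ℕ)) ^ s).map (Nat.castRingHom ℝ) := by
      simp [hP, Polynomial.map_pow, Polynomial.map_prod]
    have hcoeff : ∀ i, P.coeff i =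
        (((∏ k ∈ Finset.range M, (1 + C (c : ℕ) * X ^ (k + 1) : Polynomial ℕ)) ^ s).coeff i : ℝ) := by
      intro i; rw [hmap, Polynomial.coeff_map]; rfl
    have hnonneg : ∀ i, 0 ≤ P.coeff i := by
      intro i; rw [hcoeff i]; positivity
    have hcoeffM : P.coeff M = (Ssb b s M : ℝ) := by
      rw [hcoeff M]; rfl
    have heval : P.eval x = (∏ k ∈ Finset.range M, (1 + (c : ℝ) * x ^ (k + 1))) ^ s := by
      simp [hP, Polynomial.eval_pow, Polynomial.eval_prod]
    calc (Ssb b s M : ℝ) * x ^ M = P.coeff M * x ^ M := by rw [hcoeffM]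
      _ ≤ P.eval x := coeff_mul_pow_le_eval P hnonneg hx0.le M
      _ = _ := heval
  -- Step 2: product bound
  have hsum : ∑ k ∈ Finset.range M, x ^ (k + 1) ≤ x / (1 - x) := by
    have h1 : ∑ k ∈ Finset.range M, x ^ (k + 1) = x * ∑ k ∈ Finset.range M, x ^ k := by
      rw [Finset.mul_sum]
      exact Finset.sum_congr rfl fun k _ => by ring
    have h2 : ∑ k ∈ Finset.range M, x ^ k ≤ (1 - x)⁻¹ := by
      calc ∑ k ∈ Finset.range M, x ^ k
          ≤ ∑' k : ℕ, x ^ k := Summable.sum_le_tsum _ (fun i _ => pow_nonneg hx0.le i)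
            (summable_geometric_of_lt_one hx0.le hx1)
        _ = (1 - x)⁻¹ := tsum_geometric_of_lt_one hx0.le hx1
    rw [h1, div_eq_mul_inv]
    exact mul_le_mul_of_nonneg_left h2 hx0.le
  have hxt : x / (1 - x) ≤ 1 / t := by
    rw [div_le_div_iff₀ (by linarith) htpos]
    have h := Real.add_one_le_exp t
    have hxe : x * Real.exp t = 1 := by
      rw [hxdef, ← Real.exp_add]; simp
    nlinarith [hx0]
  have step2 : (∏ k ∈ Finset.range M, (1 + (c : ℝ) * x ^ (k + 1))) ^ s ≤
      Real.exp ((s : ℝ) * ((c : ℝ) * (1 / t))) := by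
    have hterm : ∀ k ∈ Finset.range M,
        (1 + (c : ℝ) * x ^ (k + 1)) ≤ Real.exp ((c : ℝ) * x ^ (k + 1)) := by
      intro k _
      have := Real.add_one_le_exp ((c : ℝ) * x ^ (k + 1))
      linarith
    have hprod : (∏ k ∈ Finset.range M, (1 + (c : ℝ) * x ^ (k + 1))) ≤
        Real.exp ((c : ℝ) * ∑ k ∈ Finset.range M, x ^ (k + 1)) := by
      calc (∏ k ∈ Finset.range M, (1 + (c : ℝ) * x ^ (k + 1)))
          ≤ ∏ k ∈ Finset.range M, Real.exp ((c : ℝ) * x ^ (k + 1)) :=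
            Finset.prod_le_prod (fun k _ => by positivity) hterm
        _ = Real.exp (∑ k ∈ Finset.range M, (c : ℝ) * x ^ (k + 1)) :=
            (Real.exp_sum _ _).symm
        _ = Real.exp ((c : ℝ) * ∑ k ∈ Finset.range M, x ^ (k + 1)) := by
            rw [Finset.mul_sum]
    calc (∏ k ∈ Finset.range M, (1 + (c : ℝ) * x ^ (k + 1))) ^ s
        ≤ (Real.exp ((c : ℝ) * ∑ k ∈ Finset.range M, x ^ (k + 1))) ^ s :=
          pow_le_pow_left₀ (Finset.prod_nonneg fun k _ => by positivity) hprod s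
      _ = Real.exp ((s : ℝ) * ((c : ℝ) * ∑ k ∈ Finset.range M, x ^ (k + 1))) :=
          (Real.exp_nat_mul _ s).symm
      _ ≤ Real.exp ((s : ℝ) * ((c : ℝ) * (1 / t))) := by
          apply Real.exp_le_exp.2
          have hcpos : (0:ℝ) ≤ (c:ℝ) := by positivity
          have hspos : (0:ℝ) ≤ (s:ℝ) := by positivity
          have : (c : ℝ) * ∑ k ∈ Finset.range M, x ^ (k + 1) ≤ (c : ℝ) * (1 / t) :=
            mul_le_mul_of_nonneg_left (le_trans hsum hxt) hcpos
          exact mul_le_mul_of_nonneg_left this hspos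
  -- combine
  have combined : (Ssb b s M : ℝ) * x ^ M ≤ Real.exp ((s : ℝ) * ((c : ℝ) * (1 / t))) :=
    le_trans key step2
  have hxM : x ^ M = Real.exp (-(t * M)) := by
    rw [hxdef, ← Real.exp_nat_mul]; ring_nf
  have hfinal : (Ssb b s M : ℝ) ≤ Real.exp ((s : ℝ) * ((c : ℝ) * (1 / t)) + t * M) := by
    have hxMpos : 0 < x ^ M := pow_pos hx0 M
    rw [Real.exp_add]
    have : Real.exp (t * M) = (x ^ M)⁻¹ := by
      rw [hxM, ← Real.exp_neg, neg_neg]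
    rw [this]
    rw [← div_eq_mul_inv, le_div_iff₀ hxMpos]
    exact combined
  have harg : (s : ℝ) * ((c : ℝ) * (1 / t)) + t * M = 2 * A := by
    have h1 : t * M = A := by rw [ht]; field_simp
    have h2 : (s : ℝ) * ((c : ℝ) * (1 / t)) = A := by
      have h1t : (1 : ℝ) / t = (M : ℝ) / A := by rw [ht, one_div_div]
      rw [h1t]
      field_simp
      nlinarith [hA2]
    linarith
  rw [harg] at hfinal
  exact hfinal
end

section
/- Let b ≥ 2 be an integer, s ≥ 1, c > 0 a real number, and M' a real number with M' ≥ (1+c)²·(b-1)·s/(log b)². Then ∑_{m = ⌈M'⌉}^{∞} b^{-m}·exp(2√((b-1)·s·m)) ≤ (1 + ((1+c)/c)·(1/log b))·b^{-M'}·exp(2√((b-1)·s·M')). -/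
set_option maxHeartbeats 2000000 in
/-- **Tail estimate.** For integers `b ≥ 2`, `s ≥ 1`, a real `c > 0` and a real
`M' ≥ (1+c)²(b-1)s/(log b)²`, one has
`∑_{m=⌈M'⌉}^∞ b^{-m} exp(2√((b-1)sm)) ≤ (1 + ((1+c)/c)(1/log b)) b^{-M'} exp(2√((b-1)sM'))`. -/
theorem tail_sum_estimate (b s : ℕ) (hb : 2 ≤ b) (hs : 1 ≤ s) (c M' : ℝ)
    (hc : 0 < c) (hM' : (1 + c) ^ 2 * ((b : ℝ) - 1) * s / Real.log b ^ 2 ≤ M') :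
    (∑' m : ℕ, if ⌈M'⌉₊ ≤ m then
        ((b : ℝ) ^ m)⁻¹ * Real.exp (2 * Real.sqrt (((b : ℝ) - 1) * s * m)) else 0) ≤
      (1 + (1 + c) / c * (1 / Real.log b)) * (b : ℝ) ^ (-M') *
        Real.exp (2 * Real.sqrt (((b : ℝ) - 1) * s * M')) := by
  have hb2 : (2:ℝ) ≤ (b:ℝ) := by exact_mod_cast hb
  have hb1 : (1:ℝ) < b := by linarith
  have hb0 : (0:ℝ) < b := by linarith
  set L := Real.log b with hLdef
  clear_value L
  have hL0 : 0 < L := by rw [hLdef]; exact Real.log_pos hb1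
  set K := ((b:ℝ) - 1) * (s:ℝ) with hKdef
  clear_value K
  have hs1 : (1:ℝ) ≤ (s:ℝ) := by exact_mod_cast hs
  have hK1 : (1:ℝ) ≤ K := by nlinarith
  have hK0 : (0:ℝ) < K := by linarith
  have hc1 : (1:ℝ) < 1 + c := by linarith
  have hM0 : 0 < M' := by
    refine lt_of_lt_of_le ?_ hM'
    apply div_pos (by nlinarith) (by positivity)
  have hM'' : (1 + c)^2 * K ≤ M' * L^2 := by
    rw [div_le_iff₀ (by positivity)] at hM'
    nlinarith [hM']
  set u := L / (1 + c) with hudef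
  clear_value u
  have hu0 : 0 < u := by rw [hudef]; positivity
  have huL : u < L := by
    rw [hudef, div_lt_iff₀ (by linarith)]; nlinarith
  set N := ⌈M'⌉₊ with hNdef
  clear_value N
  have hNM : M' ≤ (N:ℝ) := by rw [hNdef]; exact Nat.le_ceil M'
  -- key sqrt estimate
  have hkey : ∀ x x' : ℝ, M' ≤ x → x ≤ x' →
      2 * Real.sqrt (K * x') ≤ 2 * Real.sqrt (K * x) + (x' - x) * u := by
    intro x x' hx hxx'
    have hx0 : 0 < x := lt_of_lt_of_le hM0 hx
    set S := Real.sqrt (K * x) with hSdef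
    clear_value S
    have hS0 : 0 ≤ S := by rw [hSdef]; exact Real.sqrt_nonneg _
    have hS2 : S ^ 2 = K * x := by rw [hSdef]; exact Real.sq_sqrt (by positivity)
    have hKu : K ≤ S * u := by
      have hxL : (1 + c) ^ 2 * K ≤ x * L ^ 2 :=
        le_trans hM'' (mul_le_mul_of_nonneg_right hx (sq_nonneg L))
      have hA2 : (K * (1 + c)) ^ 2 ≤ (S * L) ^ 2 := by
        nlinarith [mul_le_mul_of_nonneg_left hxL hK0.le]
      have hKS : K * (1 + c) ≤ S * L := by nlinarith [mul_nonneg hS0 hL0.le]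
      rw [hudef, ← mul_div_assoc, le_div_iff₀ (by linarith : (0:ℝ) < 1 + c)]
      exact hKS
    set t := (x' - x) * u / 2 with htdef
    clear_value t
    have ht0 : 0 ≤ t := by
      have h : 0 ≤ x' - x := by linarith
      rw [htdef]; positivity
    have h1 : K * x' ≤ (S + t) ^ 2 := by
      have hprod : 0 ≤ (S * u - K) * (x' - x) :=
        mul_nonneg (by linarith) (by linarith)
      have hexpand : (S + t) ^ 2 = K * x + 2 * S * t + t ^ 2 := by
        rw [← hS2]; ring
      have h2St : 2 * S * t = S * u * (x' - x) := by rw [htdef]; ring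
      rw [hexpand, h2St]
      nlinarith [sq_nonneg t, hprod]
    calc 2 * Real.sqrt (K * x') ≤ 2 * Real.sqrt ((S + t) ^ 2) := by
          have := Real.sqrt_le_sqrt h1
          linarith
      _ = 2 * (S + t) := by rw [Real.sqrt_sq (by positivity)]
      _ = 2 * S + (x' - x) * u := by rw [htdef]; ring
  set r := Real.exp (u - L) with hrdef
  clear_value r
  have hr0 : 0 < r := by rw [hrdef]; exact Real.exp_pos _
  have hr1 : r < 1 := by
    rw [hrdef, Real.exp_lt_one_iff]; linarith
  have hbinv : (b:ℝ)⁻¹ = Real.exp (-L) := by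
    rw [hLdef, Real.exp_neg, Real.exp_log hb0]
  -- ratio estimate
  have hratio : ∀ m : ℕ, (N:ℕ) ≤ m →
      ((b:ℝ) ^ (m+1))⁻¹ * Real.exp (2 * Real.sqrt (K * ((m:ℝ)+1))) ≤
        r * (((b:ℝ) ^ m)⁻¹ * Real.exp (2 * Real.sqrt (K * (m:ℝ)))) := by
    intro m hm
    have hmM : M' ≤ (m:ℝ) := hNM.trans (by exact_mod_cast hm)
    have h2 := hkey (m:ℝ) ((m:ℝ)+1) hmM (by linarith)
    have h2' : 2 * Real.sqrt (K * ((m:ℝ)+1)) ≤ 2 * Real.sqrt (K * (m:ℝ)) + u := by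
      have : ((m:ℝ) + 1 - m) * u = u := by ring
      linarith [this ▸ h2]
    have hpow : ((b:ℝ) ^ (m+1))⁻¹ = ((b:ℝ) ^ m)⁻¹ * (b:ℝ)⁻¹ := by
      rw [pow_succ, mul_inv]
    calc ((b:ℝ) ^ (m+1))⁻¹ * Real.exp (2 * Real.sqrt (K * ((m:ℝ)+1)))
        ≤ ((b:ℝ) ^ m)⁻¹ * Real.exp (-L) * Real.exp (2 * Real.sqrt (K * (m:ℝ)) + u) := by
          rw [hpow, hbinv]
          exact mul_le_mul_of_nonneg_left (Real.exp_le_exp.mpr h2') (by positivity)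
      _ = r * (((b:ℝ) ^ m)⁻¹ * Real.exp (2 * Real.sqrt (K * (m:ℝ)))) := by
          rw [hrdef, show u - L = u + -L by ring, Real.exp_add, Real.exp_add]
          ring
  set fN : ℝ := ((b:ℝ) ^ N)⁻¹ * Real.exp (2 * Real.sqrt (K * (N:ℝ))) with hfNdef
  clear_value fN
  have hfN0 : 0 ≤ fN := by rw [hfNdef]; positivity
  have hiter : ∀ k : ℕ,
      ((b:ℝ) ^ (N+k))⁻¹ * Real.exp (2 * Real.sqrt (K * ((N+k : ℕ):ℝ))) ≤ r ^ k * fN := by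
    intro k
    induction k with
    | zero => simp [hfNdef]
    | succ k ih =>
        have h1 := hratio (N+k) (Nat.le_add_right _ _)
        have hcast : ((N+(k+1) : ℕ):ℝ) = ((N+k : ℕ):ℝ) + 1 := by push_cast; ring
        calc ((b:ℝ) ^ (N+(k+1)))⁻¹ * Real.exp (2 * Real.sqrt (K * ((N+(k+1) : ℕ):ℝ)))
            = ((b:ℝ) ^ ((N+k)+1))⁻¹ * Real.exp (2 * Real.sqrt (K * (((N+k:ℕ)):ℝ)+K*1)) := by
              rw [hcast]; ring_nf
          _ ≤ r * (((b:ℝ) ^ (N+k))⁻¹ * Real.exp (2 * Real.sqrt (K * ((N+k:ℕ):ℝ)))) := by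
              have : K * (((N+k:ℕ)):ℝ) + K*1 = K * (((N+k:ℕ):ℝ)+1) := by ring
              rw [this]; exact h1
          _ ≤ r * (r ^ k * fN) := by
              exact mul_le_mul_of_nonneg_left ih hr0.le
          _ = r ^ (k+1) * fN := by ring
  have hbound : ∀ m : ℕ, N ≤ m →
      ((b:ℝ) ^ m)⁻¹ * Real.exp (2 * Real.sqrt (K * (m:ℝ))) ≤ r ^ (m - N) * fN := by
    intro m hm
    obtain ⟨k, rfl⟩ := Nat.exists_eq_add_of_le hm
    simpa [Nat.add_sub_cancel_left] using hiter k
  -- fN ≤ F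
  set F : ℝ := Real.exp (L * (-M')) * Real.exp (2 * Real.sqrt (K * M')) with hFdef
  clear_value F
  have hF0 : 0 ≤ F := by rw [hFdef]; positivity
  have hbN : ((b:ℝ) ^ N)⁻¹ = Real.exp (-((N:ℝ) * L)) := by
    rw [Real.exp_neg, hLdef, mul_comm (N:ℝ), Real.exp_mul, Real.exp_log hb0,
      Real.rpow_natCast]
  have hfNF : fN ≤ F := by
    have h2 := hkey M' (N:ℝ) le_rfl hNM
    have h3 : ((N:ℝ) - M') * u ≤ ((N:ℝ) - M') * L :=
      mul_le_mul_of_nonneg_left huL.le (by linarith)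
    rw [hfNdef, hFdef, hbN, ← Real.exp_add, ← Real.exp_add]
    exact Real.exp_le_exp.mpr (by linarith)
  -- coefficient bound
  have hcoef : (1 - r)⁻¹ ≤ 1 + (1 + c) / c * (1 / L) := by
    have hlam0 : 0 < L - u := by linarith
    have hexp : 1 + (L - u) ≤ Real.exp (L - u) := by
      have := Real.add_one_le_exp (L - u); linarith
    have hrle : r ≤ (1 + (L - u))⁻¹ := by
      rw [hrdef, show u - L = -(L - u) by ring, Real.exp_neg]
      exact inv_anti₀ (by linarith) hexp
    have h4 : (L - u) / (1 + (L - u)) ≤ 1 - r := by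
      have : (1:ℝ) - (1 + (L - u))⁻¹ = (L - u) / (1 + (L - u)) := by
        field_simp
        ring
      linarith [this]
    calc (1 - r)⁻¹ ≤ ((L - u) / (1 + (L - u)))⁻¹ :=
          inv_anti₀ (by positivity) h4
      _ = 1 + 1 / (L - u) := by
          rw [inv_div, add_div, div_self (by linarith : L - u ≠ 0)]
          ring
      _ = 1 + (1 + c) / c * (1 / L) := by
          congr 1
          rw [hudef, show L - L / (1 + c) = c * L / (1 + c) by field_simp; ring]
          rw [one_div_div]
          field_simp
  -- main estimate
  have hrpow : (b:ℝ) ^ (-M') = Real.exp (L * (-M')) := by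
    rw [hLdef, Real.rpow_def_of_pos hb0]
  rw [hrpow, mul_assoc]
  have hC0 : (0:ℝ) ≤ 1 + (1 + c) / c * (1 / L) := by positivity
  apply tsum_le_of_sum_le' (by positivity)
  intro T
  calc ∑ m ∈ T, (if N ≤ m then ((b:ℝ) ^ m)⁻¹ * Real.exp (2 * Real.sqrt (K * (m:ℝ))) else 0)
      ≤ ∑ m ∈ T, (if N ≤ m then r ^ (m - N) * fN else 0) := by
        apply Finset.sum_le_sum
        intro m _
        by_cases hm : N ≤ m
        · simp only [if_pos hm]; exact hbound m hm
        · simp [hm]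
    _ = ∑ m ∈ T.filter (fun m => N ≤ m), r ^ (m - N) * fN := by
        rw [Finset.sum_filter]
    _ = (∑ k ∈ (T.filter (fun m => N ≤ m)).image (fun m => m - N), r ^ k) * fN := by
        rw [Finset.sum_image, Finset.sum_mul]
        intro x hx y hy hxy
        simp only [Finset.coe_filter, Finset.mem_coe, Finset.mem_filter, Set.mem_setOf_eq] at hx hy hxy
        omega
    _ ≤ (∑' k : ℕ, r ^ k) * fN := by
        apply mul_le_mul_of_nonneg_right _ hfN0
        exact Summable.sum_le_tsum _ (fun k _ => by positivity)
          (summable_geometric_of_lt_one hr0.le hr1)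
    _ = (1 - r)⁻¹ * fN := by rw [tsum_geometric_of_lt_one hr0.le hr1]
    _ ≤ (1 + (1 + c) / c * (1 / L)) * F :=
        mul_le_mul hcoef hfNF hfN0 hC0
    _ = (1 + (1 + c) / c * (1 / L)) * (Real.exp (L * (-M')) * Real.exp (2 * Real.sqrt (K * M'))) := by
        rw [hFdef]
end

section
/- Let G be a finite abelian group of order b, p_b the smallest prime factor of b, s, n, d, M positive integers, and vol_{s,n}(M-1) the number of A ∈ (G^∨)^{s×n} with Dick weight μ(A) ≤ M-1. If vol_{s,n}(M-1) ≤ p_b^d, then there exists a subgroup P ⊆ G^{s×n} with |P| ≤ b^d such that every nonzero element of P^⊥ has Dick weight at least M. -/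
open scoped Classical

section Aux
variable {G : Type*} [AddCommGroup G] [Fintype G] {s n : ℕ}

/-- The pairing `Ψ_A(B) = ∏ A i j (B i j)`. -/
noncomputable def dwPsi (A : Fin s → Fin n → AddChar G ℂ)
    (B : Fin s → Fin n → G) : ℂ :=
  ∏ i : Fin s, ∏ j : Fin n, A i j (B i j)

lemma dwPsi_zero (A : Fin s → Fin n → AddChar G ℂ) : dwPsi A 0 = 1 := by
  simp [dwPsi]

lemma dwPsi_add (A : Fin s → Fin n → AddChar G ℂ) (B C : Fin s → Fin n → G) :
    dwPsi A (B + C) = dwPsi A B * dwPsi A C := by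
  simp [dwPsi, AddChar.map_add_eq_mul, Finset.prod_mul_distrib]

/-- The kernel of the pairing with `A`, as a subgroup. -/
noncomputable def dwKer (A : Fin s → Fin n → AddChar G ℂ) :
    AddSubgroup (Fin s → Fin n → G) where
  carrier := {B | dwPsi A B = 1}
  zero_mem' := dwPsi_zero A
  add_mem' := by
    intro B C hB hC
    simp only [Set.mem_setOf_eq] at *
    rw [dwPsi_add, hB, hC, mul_one]
  neg_mem' := by
    intro B hB
    simp only [Set.mem_setOf_eq] at *
    have h := dwPsi_add A (-B) B
    rw [neg_add_cancel, dwPsi_zero, hB, mul_one] at h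
    exact h.symm

lemma dwKer_mem {A : Fin s → Fin n → AddChar G ℂ} {B : Fin s → Fin n → G} :
    B ∈ dwKer A ↔ dwPsi A B = 1 := Iff.rfl

lemma exists_dwPsi_ne_one {A : Fin s → Fin n → AddChar G ℂ}
    (hA : A ≠ fun _ _ => 1) : ∃ B, dwPsi A B ≠ 1 := by
  obtain ⟨i0, hi0⟩ := Function.ne_iff.mp hA
  obtain ⟨j0, hj0⟩ := Function.ne_iff.mp hi0
  obtain ⟨g, hg⟩ := AddChar.ne_one_iff.mp hj0
  refine ⟨fun i j => if i = i0 ∧ j = j0 then g else 0, ?_⟩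
  have h : dwPsi A (fun i j => if i = i0 ∧ j = j0 then g else 0) = A i0 j0 g := by
    unfold dwPsi
    rw [Finset.prod_eq_single i0]
    · rw [Finset.prod_eq_single j0]
      · simp
      · intro j _ hj; simp [hj]
      · simp
    · intro i _ hi
      apply Finset.prod_eq_one
      intro j _
      simp [hi]
    · simp
  rw [h]; exact hg

/-- For nontrivial `A`, the kernel has index at least the least prime factor of `|G|`. -/
lemma dwKer_card_le (hb2 : 2 ≤ Fintype.card G) (hs : 0 < s) (hn : 0 < n)
    {A : Fin s → Fin n → AddChar G ℂ} (hA : A ≠ fun _ _ => 1) :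
    Nat.card (dwKer A) * (Fintype.card G).minFac ≤ Fintype.card (Fin s → Fin n → G) := by
  set K := dwKer A
  have hKt : K ≠ ⊤ := by
    obtain ⟨B, hB⟩ := exists_dwPsi_ne_one hA
    intro h
    exact hB (dwKer_mem.mp (h ▸ AddSubgroup.mem_top B : B ∈ K))
  have hidx1 : K.index ≠ 1 := fun h => hKt (AddSubgroup.index_eq_one.mp h)
  have hidx0 : K.index ≠ 0 := AddSubgroup.index_ne_zero_of_finite
  have hcard : Nat.card (Fin s → Fin n → G) = Fintype.card G ^ (n * s) := by
    rw [Nat.card_eq_fintype_card]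
    simp [Fintype.card_fun, pow_mul]
  have hdvd : K.index ∣ Fintype.card G ^ (n * s) := by
    rw [← hcard]; exact AddSubgroup.index_dvd_card K
  have hq : (Fintype.card G).minFac ≤ K.index := by
    have hqp : (K.index).minFac.Prime := Nat.minFac_prime hidx1
    have h1 : (K.index).minFac ∣ Fintype.card G ^ (n * s) :=
      dvd_trans (Nat.minFac_dvd _) hdvd
    have h2 : (K.index).minFac ∣ Fintype.card G := hqp.dvd_of_dvd_pow h1
    exact le_trans (Nat.minFac_le_of_dvd hqp.two_le h2)
      (Nat.minFac_le (Nat.pos_of_ne_zero hidx0))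
  calc Nat.card K * (Fintype.card G).minFac ≤ Nat.card K * K.index :=
        Nat.mul_le_mul_left _ hq
    _ = Nat.card (Fin s → Fin n → G) := AddSubgroup.card_mul_index K
    _ = Fintype.card (Fin s → Fin n → G) := Nat.card_eq_fintype_card

lemma dwKer_filter_card (A : Fin s → Fin n → AddChar G ℂ) :
    (Finset.univ.filter fun B : Fin s → Fin n → G => dwPsi A B = 1).card
      = Nat.card (dwKer A) := by
  rw [Nat.card_eq_fintype_card, Fintype.card_subtype]
  rfl

/-- Averaging: some `B` kills at most a `1/p` fraction of any finite set of
nontrivial character matrices. -/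
lemma exists_good_B (hb2 : 2 ≤ Fintype.card G) (hs : 0 < s) (hn : 0 < n)
    (S : Finset (Fin s → Fin n → AddChar G ℂ))
    (hS : ∀ A ∈ S, A ≠ fun _ _ => 1) :
    ∃ B : Fin s → Fin n → G,
      (S.filter fun A => dwPsi A B = 1).card * (Fintype.card G).minFac ≤ S.card := by
  by_contra hcon
  push_neg at hcon
  set N := Fintype.card (Fin s → Fin n → G) with hN
  have hNpos : 0 < N := Fintype.card_pos
  have key : ∑ B : Fin s → Fin n → G,
      (S.filter fun A => dwPsi A B = 1).card * (Fintype.card G).minFac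
      ≤ S.card * N := by
    have swap : ∑ B : Fin s → Fin n → G, (S.filter fun A => dwPsi A B = 1).card
        = ∑ A ∈ S, (Finset.univ.filter fun B : Fin s → Fin n → G => dwPsi A B = 1).card := by
      simp only [Finset.card_filter]
      rw [Finset.sum_comm]
    calc ∑ B : Fin s → Fin n → G,
        (S.filter fun A => dwPsi A B = 1).card * (Fintype.card G).minFac
        = (∑ B : Fin s → Fin n → G, (S.filter fun A => dwPsi A B = 1).card)
            * (Fintype.card G).minFac := by rw [Finset.sum_mul]
      _ = (∑ A ∈ S, (Finset.univ.filter fun B : Fin s → Fin n → G =>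
            dwPsi A B = 1).card) * (Fintype.card G).minFac := by rw [swap]
      _ = ∑ A ∈ S, (Finset.univ.filter fun B : Fin s → Fin n → G =>
            dwPsi A B = 1).card * (Fintype.card G).minFac := by rw [Finset.sum_mul]
      _ ≤ ∑ A ∈ S, N := by
          apply Finset.sum_le_sum
          intro A hA
          rw [dwKer_filter_card]
          exact dwKer_card_le hb2 hs hn (hS A hA)
      _ = S.card * N := by rw [Finset.sum_const, smul_eq_mul]
  have key2 : N * (S.card + 1) ≤ ∑ B : Fin s → Fin n → G,
      (S.filter fun A => dwPsi A B = 1).card * (Fintype.card G).minFac := by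
    calc N * (S.card + 1) = ∑ _B : Fin s → Fin n → G, (S.card + 1) := by
          rw [Finset.sum_const, smul_eq_mul, Finset.card_univ]
      _ ≤ _ := Finset.sum_le_sum fun B _ => hcon B
  have := le_trans key2 key
  nlinarith

end Aux

/-- **Existence of subgroups with large minimum Dick weight.** If the ball
`vol_{s,n}(M-1)` of radius `M-1` for the Dick weight has at most `p_b^d` elements,
where `p_b` is the smallest prime factor of `b = |G|`, then there is a subgroup
`P ⊆ G^{s×n}` with `|P| ≤ b^d` such that every nonzero element of `P^⊥` has Dick
weight at least `M`. -/
theorem exists_subgroup_min_dick_weight (G : Type*) [AddCommGroup G] [Fintype G]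
    (b s n d M : ℕ) (hb : b = Fintype.card G) (hs : 0 < s) (hn : 0 < n)
    (hd : 0 < d) (hM : 0 < M)
    (hvol : Nat.card {A : Fin s → Fin n → AddChar G ℂ // dickWeight A ≤ M - 1} ≤
      b.minFac ^ d) :
    ∃ P : AddSubgroup (Fin s → Fin n → G), Nat.card P ≤ b ^ d ∧
      ∀ A : Fin s → Fin n → AddChar G ℂ,
        (∀ B ∈ P, (∏ i : Fin s, ∏ j : Fin n, A i j (B i j)) = 1) →
        A ≠ (fun _ _ => 1) → M ≤ dickWeight A := by
  subst hb
  have hbpos : 0 < Fintype.card G := Fintype.card_pos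
  by_cases hb2 : 2 ≤ Fintype.card G
  swap
  · -- trivial group
    have hb1 : Fintype.card G = 1 := by omega
    have hsub : Subsingleton G := Fintype.card_le_one_iff_subsingleton.mp (by omega)
    refine ⟨⊥, ?_, ?_⟩
    · have h1 : Nat.card (⊥ : AddSubgroup (Fin s → Fin n → G)) = 1 := by simp
      rw [h1]
      exact Nat.one_le_pow _ _ hbpos
    · intro A _ hAne
      exfalso
      apply hAne
      funext i j
      ext g
      have : g = 0 := Subsingleton.elim _ _
      rw [this, AddChar.map_zero_eq_one, AddChar.one_apply]
  -- main case
  set p := (Fintype.card G).minFac with hp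
  have hp2 : 2 ≤ p := (Nat.minFac_prime (by omega)).two_le
  set V := Nat.card {A : Fin s → Fin n → AddChar G ℂ // dickWeight A ≤ M - 1} with hV
  have hTV : (Finset.univ.filter fun A : Fin s → Fin n → AddChar G ℂ =>
      dickWeight A ≤ M - 1).card = V := by
    rw [hV, Nat.card_eq_fintype_card, Fintype.card_subtype]
  have htriv : (fun _ _ => (1 : AddChar G ℂ)) ∈
      Finset.univ.filter fun A : Fin s → Fin n → AddChar G ℂ => dickWeight A ≤ M - 1 := by
    simp [dickWeight]
  have key : ∀ k : ℕ, ∃ B : Fin k → (Fin s → Fin n → G),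
      (Finset.univ.filter fun A : Fin s → Fin n → AddChar G ℂ =>
        dickWeight A ≤ M - 1 ∧ A ≠ (fun _ _ => 1) ∧ ∀ i, dwPsi A (B i) = 1).card * p ^ k
        ≤ V - 1 := by
    intro k
    induction k with
    | zero =>
      refine ⟨Fin.elim0, ?_⟩
      rw [pow_zero, mul_one]
      have hsub : (Finset.univ.filter fun A : Fin s → Fin n → AddChar G ℂ =>
          dickWeight A ≤ M - 1 ∧ A ≠ (fun _ _ => 1) ∧ ∀ i, dwPsi A (Fin.elim0 i) = 1) ⊆
          (Finset.univ.filter fun A : Fin s → Fin n → AddChar G ℂ =>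
            dickWeight A ≤ M - 1).erase (fun _ _ => 1) := by
        intro A hA
        simp only [Finset.mem_filter, Finset.mem_univ, true_and] at hA
        exact Finset.mem_erase.mpr ⟨hA.2.1, by
          simp only [Finset.mem_filter, Finset.mem_univ, true_and]; exact hA.1⟩
      calc _ ≤ ((Finset.univ.filter fun A : Fin s → Fin n → AddChar G ℂ =>
            dickWeight A ≤ M - 1).erase (fun _ _ => 1)).card := Finset.card_le_card hsub
        _ = V - 1 := by rw [Finset.card_erase_of_mem htriv, hTV]
    | succ k ih =>
      obtain ⟨B, hB⟩ := ih
      set S := Finset.univ.filter fun A : Fin s → Fin n → AddChar G ℂ =>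
        dickWeight A ≤ M - 1 ∧ A ≠ (fun _ _ => 1) ∧ ∀ i, dwPsi A (B i) = 1 with hS
      obtain ⟨B', hB'⟩ := exists_good_B hb2 hs hn S (by
        intro A hA
        simp only [hS, Finset.mem_filter] at hA
        exact hA.2.2.1)
      refine ⟨Fin.snoc B B', le_trans ?_ hB⟩
      rw [pow_succ, mul_comm (p ^ k) p, ← mul_assoc]
      refine Nat.mul_le_mul_right _
        (le_trans (Nat.mul_le_mul_right _ (Finset.card_le_card ?_)) hB')
      intro A hA
      simp only [Finset.mem_filter, Finset.mem_univ, true_and] at hA ⊢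
      refine ⟨Finset.mem_filter.mpr ⟨Finset.mem_univ _, hA.1, hA.2.1, fun i => ?_⟩, ?_⟩
      · have h := hA.2.2 i.castSucc
        rwa [Fin.snoc_castSucc] at h
      · have h := hA.2.2 (Fin.last k)
        rwa [Fin.snoc_last] at h
  obtain ⟨B, hBkey⟩ := key d
  -- the bad set is empty
  have hempty : ∀ A : Fin s → Fin n → AddChar G ℂ,
      dickWeight A ≤ M - 1 → A ≠ (fun _ _ => 1) → ¬ (∀ i, dwPsi A (B i) = 1) := by
    intro A h1 h2 h3
    have hmem : A ∈ Finset.univ.filter fun A : Fin s → Fin n → AddChar G ℂ =>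
        dickWeight A ≤ M - 1 ∧ A ≠ (fun _ _ => 1) ∧ ∀ i, dwPsi A (B i) = 1 := by
      simp only [Finset.mem_filter, Finset.mem_univ, true_and]
      exact ⟨h1, h2, h3⟩
    have hc1 : 1 ≤ (Finset.univ.filter fun A : Fin s → Fin n → AddChar G ℂ =>
        dickWeight A ≤ M - 1 ∧ A ≠ (fun _ _ => 1) ∧ ∀ i, dwPsi A (B i) = 1).card :=
      Finset.card_pos.mpr ⟨A, hmem⟩
    have hVp : V - 1 < p ^ d := by
      have hV1 : 1 ≤ V := by
        rw [← hTV]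
        exact Finset.card_pos.mpr ⟨_, htriv⟩
      have : V ≤ p ^ d := hvol
      omega
    have : p ^ d ≤ V - 1 := le_trans (by simpa using Nat.mul_le_mul_right (p ^ d) hc1) hBkey
    omega
  -- build the subgroup
  have hNZ : NeZero (Fintype.card G) := ⟨Fintype.card_ne_zero⟩
  have hzero : ∀ i : Fin d,
      (zmultiplesHom (Fin s → Fin n → G) (B i)) (Fintype.card G : ℤ) = 0 := by
    intro i
    rw [zmultiplesHom_apply, natCast_zsmul]
    funext i' j'
    simp only [Pi.smul_apply, Pi.zero_apply]
    exact card_nsmul_eq_zero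
  set f : (Fin d → ZMod (Fintype.card G)) →+ (Fin s → Fin n → G) :=
    ∑ i : Fin d, (ZMod.lift (Fintype.card G)
      ⟨zmultiplesHom (Fin s → Fin n → G) (B i), hzero i⟩).comp
      (Pi.evalAddMonoidHom (fun _ => ZMod (Fintype.card G)) i) with hf
  have hfB : ∀ i : Fin d, f (Pi.single i 1) = B i := by
    intro i
    rw [hf]
    rw [AddMonoidHom.finset_sum_apply]
    rw [Finset.sum_eq_single i]
    · simp only [AddMonoidHom.comp_apply, Pi.evalAddMonoidHom_apply, Pi.single_eq_same]
      have : (1 : ZMod (Fintype.card G)) = ((1 : ℤ) : ZMod (Fintype.card G)) := by push_cast; rfl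
      rw [this, ZMod.lift_coe]
      simp [zmultiplesHom_apply]
    · intro i' _ hi'
      simp [Pi.single_eq_of_ne hi']
    · simp
  refine ⟨f.range, ?_, ?_⟩
  · have hsurj : Function.Surjective
        (fun x : Fin d → ZMod (Fintype.card G) => (⟨f x, ⟨x, rfl⟩⟩ : f.range)) := by
      rintro ⟨y, x, rfl⟩
      exact ⟨x, rfl⟩
    calc Nat.card f.range ≤ Nat.card (Fin d → ZMod (Fintype.card G)) :=
          Nat.card_le_card_of_surjective _ hsurj
      _ = Fintype.card G ^ d := by
          rw [Nat.card_eq_fintype_card, Fintype.card_fun]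
          simp [ZMod.card]
  · intro A hA hAne
    by_contra hlt
    push_neg at hlt
    have h1 : dickWeight A ≤ M - 1 := by omega
    refine hempty A h1 hAne fun i => ?_
    exact hA (B i) (hfB i ▸ ⟨Pi.single i 1, rfl⟩)
end

section
/- Let G be a finite abelian group with b elements, let α_b = (log p_b)/2 where p_b is the smallest prime factor of b, and c > 0 a real number. Then for all positive integers s, n, and d with d ≥ (1+c)·(b-1)·s/(α_b·log b), there exists a subgroup P ⊆ G^{s×n} with |P| ≤ b^d such that WAFOM(P) ≤ (1 + ((1+c)/c)·(1/log b))·b^{-α_b²·d²/((b-1)s)}·e^{2·α_b·d}. -/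
set_option maxHeartbeats 1000000

open scoped Classical

/-- Fiber counting: solutions of `g ^ v = y` for `v < b` number at most `b / orderOf g`. -/
lemma count_pow_eq {γ : Type*} [Group γ] (g : γ) (y : γ) (b : ℕ) (hdvd : orderOf g ∣ b) :
    (Finset.univ.filter fun v : Fin b => g ^ (v : ℕ) = y).card ≤ b / orderOf g := by
  classical
  set q := orderOf g with hqdef
  have : (Finset.univ.filter fun v : Fin b => g ^ (v : ℕ) = y).card ≤
      (Finset.univ : Finset (Fin (b / q))).card := by
    apply Finset.card_le_card_of_injOn (fun v => ⟨(v : ℕ) / q, Nat.div_lt_div_of_lt_of_dvd hdvd v.isLt⟩)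
    · intro _ _; exact Finset.mem_univ _
    · intro v hv w hw hvw
      simp only [Finset.mem_coe, Finset.mem_filter] at hv hw
      have hmod : (v : ℕ) ≡ (w : ℕ) [MOD q] := by
        rw [hqdef] at *
        exact pow_eq_pow_iff_modEq.mp (hv.2.trans hw.2.symm)
      have hdivq : (v : ℕ) / q = (w : ℕ) / q := by
        have := congrArg Fin.val hvw
        simpa using this
      have hm : (v : ℕ) % q = (w : ℕ) % q := hmod
      have : (v : ℕ) = (w : ℕ) := by
        conv_lhs => rw [← Nat.div_add_mod (v : ℕ) q]
        conv_rhs => rw [← Nat.div_add_mod (w : ℕ) q]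
        rw [hdivq, hm]
      exact Fin.ext this
  simpa using this


/-- Counting the `w` for which the weighted product of characters collapses to `1`. -/
lemma slice_count {G : Type*} [AddCommGroup G] [Fintype G] {s n : ℕ}
    (A : Fin s → Fin n → AddChar G ℂ) (i0 : Fin s) (j0 : Fin n) (hA : A i0 j0 ≠ 1) :
    (Fintype.card G).minFac *
      (Finset.univ.filter fun w : Fin s → Fin n → Fin (Fintype.card G) =>
        (∏ i, ∏ j, (A i j) ^ ((w i j : ℕ))) = 1).card ≤
    Fintype.card (Fin s → Fin n → Fin (Fintype.card G)) := by
  classical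
  set b := Fintype.card G with hbdef
  set χ := A i0 j0 with hχdef
  set q := orderOf χ with hqdef
  have hq_dvd : q ∣ b := by
    have h1 : orderOf χ ∣ Fintype.card (AddChar G ℂ) := orderOf_dvd_card
    rwa [AddChar.card_eq] at h1
  have hq2 : q ≠ 1 := by
    rw [hqdef]
    simpa [orderOf_eq_one_iff] using hA
  have hq1 : 0 < q := orderOf_pos χ
  have hp_le_q : b.minFac ≤ q := Nat.minFac_le_of_dvd (by omega) hq_dvd
  set F : (Fin s → Fin n → Fin b) → (Fin s → Fin n → Fin b) :=
    fun w i j => if i = i0 ∧ j = j0 then (0 : Fin b) else w i j with hFdef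
  set S := Finset.univ.filter fun w : Fin s → Fin n → Fin b =>
        (∏ i, ∏ j, (A i j) ^ ((w i j : ℕ))) = 1 with hSdef
  have hfiber : ∀ r ∈ S.image F, (S.filter fun w => F w = r).card ≤ b / q := by
    intro r hr
    set R : AddChar G ℂ := ∏ σ ∈ (Finset.univ.erase (i0, j0) : Finset (Fin s × Fin n)),
        (A σ.1 σ.2) ^ ((r σ.1 σ.2 : ℕ)) with hRdef
    have key : ∀ w ∈ S.filter fun w => F w = r, χ ^ ((w i0 j0 : ℕ)) = R⁻¹ := by
      intro w hw
      rw [Finset.mem_filter, hSdef, Finset.mem_filter] at hw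
      obtain ⟨⟨-, hcond⟩, hFw⟩ := hw
      have hsplit : (∏ σ : Fin s × Fin n, (A σ.1 σ.2) ^ ((w σ.1 σ.2 : ℕ))) = 1 := by
        rw [Fintype.prod_prod_type]
        exact hcond
      rw [← Finset.mul_prod_erase Finset.univ _ (Finset.mem_univ (i0, j0))] at hsplit
      have hrest : (∏ σ ∈ Finset.univ.erase (i0, j0),
          (A σ.1 σ.2) ^ ((w σ.1 σ.2 : ℕ))) = R := by
        apply Finset.prod_congr rfl
        intro σ hσ
        have hne : ¬(σ.1 = i0 ∧ σ.2 = j0) := by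
          intro h; exact (Finset.ne_of_mem_erase hσ) (Prod.ext h.1 h.2)
        have hwr : w σ.1 σ.2 = r σ.1 σ.2 := by
          rw [← hFw]; simp [hFdef, hne]
        rw [hwr]
      rw [hrest] at hsplit
      exact eq_inv_of_mul_eq_one_left hsplit
    calc (S.filter fun w => F w = r).card
        ≤ (Finset.univ.filter fun v : Fin b => χ ^ (v : ℕ) = R⁻¹).card := by
          apply Finset.card_le_card_of_injOn (fun w => w i0 j0)
          · intro w hw
            simp only [Finset.mem_coe, Finset.mem_filter, Finset.mem_univ, true_and]
            exact key w hw
          · intro w hw w' hw' hval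
            rw [Finset.mem_coe, Finset.mem_filter] at hw hw'
            funext i j
            by_cases hij : i = i0 ∧ j = j0
            · obtain ⟨rfl, rfl⟩ := hij; exact hval
            · have h1 : F w i j = w i j := by simp [hFdef, hij]
              have h2 : F w' i j = w' i j := by simp [hFdef, hij]
              rw [← h1, ← h2, hw.2, hw'.2]
      _ ≤ b / q := count_pow_eq χ R⁻¹ b hq_dvd
  have hS : S.card ≤ (b / q) * (S.image F).card :=
    Finset.card_le_mul_card_image S (b / q) hfiber
  set Z := Finset.univ.filter fun w : Fin s → Fin n → Fin b => w i0 j0 = 0 with hZdef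
  have himg : S.image F ⊆ Z := by
    intro r hr
    obtain ⟨w, -, rfl⟩ := Finset.mem_image.mp hr
    simp [hZdef, hFdef]
  have hfib : ∀ v : Fin b,
      (Finset.univ.filter fun w : Fin s → Fin n → Fin b => w i0 j0 = v).card = Z.card := by
    intro v
    apply Finset.card_bij' (fun w _ => F w)
      (fun z _ => fun i j => if i = i0 ∧ j = j0 then v else z i j)
    · intro w hw
      simp [hZdef, hFdef]
    · intro z hz
      simp
    · intro w hw
      rw [Finset.mem_filter] at hw
      funext i j
      by_cases hij : i = i0 ∧ j = j0
      · obtain ⟨rfl, rfl⟩ := hij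
        simp [hFdef, hw.2]
      · simp [hFdef, hij]
    · intro z hz
      rw [hZdef, Finset.mem_filter] at hz
      funext i j
      by_cases hij : i = i0 ∧ j = j0
      · obtain ⟨rfl, rfl⟩ := hij
        simp [hFdef, hz.2.symm]
      · simp [hFdef, hij]
  have hcardW : Fintype.card (Fin s → Fin n → Fin b) = b * Z.card := by
    have h0 : (Finset.univ : Finset (Fin s → Fin n → Fin b)).card =
        ∑ v : Fin b, (Finset.univ.filter fun w : Fin s → Fin n → Fin b => w i0 j0 = v).card := by
      apply Finset.card_eq_sum_card_fiberwise
      intro w _; exact Finset.mem_univ _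
    rw [← Finset.card_univ, h0]
    simp only [hfib, Finset.sum_const, Finset.card_univ, Fintype.card_fin, smul_eq_mul]
  calc b.minFac * S.card ≤ b.minFac * ((b / q) * Z.card) := by
        exact Nat.mul_le_mul_left _ (hS.trans (Nat.mul_le_mul_left _ (Finset.card_le_card himg)))
    _ ≤ b * Z.card := by
        rw [← mul_assoc]
        apply Nat.mul_le_mul_right
        calc b.minFac * (b / q) ≤ b.minFac * (b / b.minFac) :=
              Nat.mul_le_mul_left _ (Nat.div_le_div_left hp_le_q (Nat.minFac_pos b))
          _ = b := Nat.mul_div_cancel' (Nat.minFac_dvd b)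
    _ = Fintype.card (Fin s → Fin n → Fin b) := hcardW.symm


open Finset in
lemma good_m_exists {G : Type*} [AddCommGroup G] [Fintype G] {s n d : ℕ}
    (Bad : Finset (Fin s → Fin n → AddChar G ℂ))
    (hBad : ∀ A ∈ Bad, A ≠ fun _ _ => 1)
    (hcard : Bad.card + 1 ≤ (Fintype.card G).minFac ^ d) :
    ∃ m : Fin d → Fin s → Fin n → Fin (Fintype.card G),
      ∀ A ∈ Bad, ¬(∀ k, (∏ i, ∏ j, (A i j) ^ ((m k i j : ℕ))) = 1) := by
  classical
  set b := Fintype.card G with hbdef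
  set p := b.minFac with hpdef
  set W := Fintype.card (Fin s → Fin n → Fin b) with hWdef
  rcases Bad.eq_empty_or_nonempty with hE | ⟨A0, hA0⟩
  · refine ⟨fun _ _ _ => ⟨0, Fintype.card_pos⟩, ?_⟩
    simp [hE]
  -- each slice set has p * card ≤ W, and is nonempty
  have hslice : ∀ A ∈ Bad,
      p * (Finset.univ.filter fun w : Fin s → Fin n → Fin b =>
        (∏ i, ∏ j, (A i j) ^ ((w i j : ℕ))) = 1).card ≤ W := by
    intro A hA
    have hne : ∃ i j, A i j ≠ 1 := by
      by_contra h
      push_neg at h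
      exact hBad A hA (funext fun i => funext fun j => h i j)
    obtain ⟨i0, j0, hij⟩ := hne
    exact slice_count A i0 j0 hij
  have hpposW : p ≤ W := by
    have h1 := hslice A0 hA0
    have h2 : 1 ≤ (Finset.univ.filter fun w : Fin s → Fin n → Fin b =>
        (∏ i, ∏ j, (A0 i j) ^ ((w i j : ℕ))) = 1).card := by
      apply Finset.card_pos.mpr
      exact ⟨fun _ _ => ⟨0, Fintype.card_pos⟩, by simp⟩
    calc p = p * 1 := (mul_one p).symm
      _ ≤ _ := Nat.mul_le_mul_left p h2
      _ ≤ W := h1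
  set T := Bad.biUnion (fun A => Finset.univ.filter
      fun m : Fin d → Fin s → Fin n → Fin b =>
        ∀ k, (∏ i, ∏ j, (A i j) ^ ((m k i j : ℕ))) = 1) with hTdef
  have hppos : 0 < p ^ d := pow_pos (Nat.minFac_pos b) d
  have hQpos : 0 < W ^ d / p ^ d := by
    exact Nat.div_pos (Nat.pow_le_pow_left hpposW d) hppos
  have hTcard : T.card < Fintype.card (Fin d → Fin s → Fin n → Fin b) := by
    have h1 : T.card ≤ ∑ A ∈ Bad, (Finset.univ.filter
        fun m : Fin d → Fin s → Fin n → Fin b =>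
          ∀ k, (∏ i, ∏ j, (A i j) ^ ((m k i j : ℕ))) = 1).card := Finset.card_biUnion_le
    have h2 : ∀ A ∈ Bad, (Finset.univ.filter
        fun m : Fin d → Fin s → Fin n → Fin b =>
          ∀ k, (∏ i, ∏ j, (A i j) ^ ((m k i j : ℕ))) = 1).card ≤ W ^ d / p ^ d := by
      intro A hA
      have hpi : (Finset.univ.filter fun m : Fin d → Fin s → Fin n → Fin b =>
          ∀ k, (∏ i, ∏ j, (A i j) ^ ((m k i j : ℕ))) = 1)
          = Fintype.piFinset (fun _ : Fin d => Finset.univ.filter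
              fun w : Fin s → Fin n → Fin b => (∏ i, ∏ j, (A i j) ^ ((w i j : ℕ))) = 1) := by
        ext m
        simp [Fintype.mem_piFinset]
      rw [hpi, Fintype.card_piFinset, Finset.prod_const, Finset.card_univ, Fintype.card_fin,
        Nat.le_div_iff_mul_le hppos, ← Nat.mul_pow]
      apply Nat.pow_le_pow_left
      rw [mul_comm]
      exact hslice A hA
    have hcardfun : Fintype.card (Fin d → Fin s → Fin n → Fin b) = W ^ d := by
      rw [Fintype.card_fun, Fintype.card_fin]
    calc T.card ≤ ∑ A ∈ Bad, (Finset.univ.filter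
        fun m : Fin d → Fin s → Fin n → Fin b =>
          ∀ k, (∏ i, ∏ j, (A i j) ^ ((m k i j : ℕ))) = 1).card := h1
      _ ≤ ∑ _A ∈ Bad, W ^ d / p ^ d := Finset.sum_le_sum h2
      _ = Bad.card * (W ^ d / p ^ d) := by rw [Finset.sum_const, smul_eq_mul]
      _ ≤ (p ^ d - 1) * (W ^ d / p ^ d) := by
          have hb' : Bad.card ≤ p ^ d - 1 := Nat.le_pred_of_lt (by exact hcard)
          exact Nat.mul_le_mul hb' le_rfl
      _ < p ^ d * (W ^ d / p ^ d) := by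
          have h' : p ^ d - 1 < p ^ d := Nat.sub_lt hppos one_pos
          exact (Nat.mul_lt_mul_right hQpos).mpr h'
      _ ≤ W ^ d := by
          rw [mul_comm]
          exact Nat.div_mul_le_self _ _
      _ = Fintype.card (Fin d → Fin s → Fin n → Fin b) := hcardfun.symm
  obtain ⟨m, hm⟩ : ∃ m : Fin d → Fin s → Fin n → Fin b, m ∉ T := by
    by_contra h
    push_neg at h
    have := Finset.card_le_card (fun x _ => h x : (Finset.univ : Finset (Fin d → Fin s → Fin n → Fin b)) ⊆ T)
    rw [Finset.card_univ] at this
    omega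
  refine ⟨m, fun A hA hall => hm ?_⟩
  exact Finset.mem_biUnion.mpr ⟨A, hA, Finset.mem_filter.mpr ⟨Finset.mem_univ _, hall⟩⟩


/-- Swap a sum over functions with a product. -/
lemma sum_fun_prod {ι κ M : Type*} [DecidableEq ι] [Fintype ι] [Fintype κ] [CommSemiring M]
    (g : ι → κ → M) :
    ∑ f : ι → κ, ∏ i, g i (f i) = ∏ i, ∑ x : κ, g i x := by
  classical
  rw [Finset.prod_univ_sum]
  rw [Fintype.piFinset_univ]


open Finset in
lemma sum_z_pow_dickWeight {G : Type*} [AddCommGroup G] [Fintype G] {s n : ℕ}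
    (z : ℝ) (hz0 : 0 ≤ z) (hz1 : z < 1) :
    ∑ A : Fin s → Fin n → AddChar G ℂ, z ^ (dickWeight A) ≤
      Real.exp (((Fintype.card G : ℝ) - 1) * s * (z / (1 - z))) := by
  classical
  set b := Fintype.card G with hbdef
  set u : Fin n → AddChar G ℂ → ℝ :=
    fun j χ => z ^ ((j.1 + 1) * (if χ = 1 then 0 else 1)) with hu
  set F : (Fin n → AddChar G ℂ) → ℝ := fun row => ∏ j, u j (row j) with hF
  have hsummand : ∀ A : Fin s → Fin n → AddChar G ℂ,
      z ^ (dickWeight A) = ∏ i, F (A i) := by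
    intro A
    rw [dickWeight, ← Finset.prod_pow_eq_pow_sum]
    apply Finset.prod_congr rfl
    intro i _
    rw [hF, ← Finset.prod_pow_eq_pow_sum]
  have hcol : ∀ j : Fin n, ∑ χ : AddChar G ℂ, u j χ = 1 + ((b : ℝ) - 1) * z ^ (j.1 + 1) := by
    intro j
    have hite : ∀ χ : AddChar G ℂ, u j χ = if χ = 1 then (1 : ℝ) else z ^ (j.1 + 1) := by
      intro χ
      by_cases h : χ = 1
      · simp [hu, h]
      · simp [hu, h]
    simp_rw [hite]
    rw [Finset.sum_ite, Finset.sum_const, Finset.sum_const]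
    rw [Finset.filter_eq', if_pos (Finset.mem_univ _)]
    rw [Finset.filter_ne', Finset.card_erase_of_mem (Finset.mem_univ _)]
    rw [Finset.card_univ, AddChar.card_eq, Finset.card_singleton]
    have hb1 : 1 ≤ b := Fintype.card_pos
    simp only [nsmul_eq_mul, smul_eq_mul, one_mul, ← hbdef]
    rw [Nat.cast_sub hb1]
    push_cast
    ring
  have hstep1 : ∑ A : Fin s → Fin n → AddChar G ℂ, z ^ (dickWeight A)
      = (∑ row, F row) ^ s := by
    calc ∑ A : Fin s → Fin n → AddChar G ℂ, z ^ (dickWeight A)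
        = ∑ A : Fin s → Fin n → AddChar G ℂ, ∏ i, F (A i) :=
          Finset.sum_congr rfl (fun A _ => hsummand A)
      _ = ∏ _i : Fin s, ∑ row, F row := sum_fun_prod (fun _ => F)
      _ = (∑ row, F row) ^ s := by rw [Finset.prod_const, Finset.card_univ, Fintype.card_fin]
  have hstep2 : (∑ row, F row) = ∏ j : Fin n, (1 + ((b : ℝ) - 1) * z ^ (j.1 + 1)) := by
    calc ∑ row, F row = ∏ j : Fin n, ∑ χ : AddChar G ℂ, u j χ := sum_fun_prod u
      _ = ∏ j : Fin n, (1 + ((b : ℝ) - 1) * z ^ (j.1 + 1)) :=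
          Finset.prod_congr rfl (fun j _ => hcol j)
  rw [hstep1, hstep2]
  -- now bound the product
  have hbR : (1 : ℝ) ≤ (b : ℝ) := by
    have : (1 : ℕ) ≤ b := Fintype.card_pos
    exact_mod_cast this
  have hfac_nonneg : ∀ j : Fin n, (0 : ℝ) ≤ 1 + ((b : ℝ) - 1) * z ^ (j.1 + 1) := by
    intro j
    have h1 : (0:ℝ) ≤ ((b : ℝ) - 1) := by linarith
    have : (0:ℝ) ≤ ((b : ℝ) - 1) * z ^ (j.1 + 1) :=
      mul_nonneg h1 (pow_nonneg hz0 _)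
    linarith
  have hfac : ∀ j : Fin n, 1 + ((b : ℝ) - 1) * z ^ (j.1 + 1)
      ≤ Real.exp (((b : ℝ) - 1) * z ^ (j.1 + 1)) := by
    intro j
    have := Real.add_one_le_exp (((b : ℝ) - 1) * z ^ (j.1 + 1))
    linarith
  have hprod : ∏ j : Fin n, (1 + ((b : ℝ) - 1) * z ^ (j.1 + 1))
      ≤ Real.exp (((b : ℝ) - 1) * (z / (1 - z))) := by
    calc ∏ j : Fin n, (1 + ((b : ℝ) - 1) * z ^ (j.1 + 1))
        ≤ ∏ j : Fin n, Real.exp (((b : ℝ) - 1) * z ^ (j.1 + 1)) :=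
          Finset.prod_le_prod (fun j _ => hfac_nonneg j) (fun j _ => hfac j)
      _ = Real.exp (∑ j : Fin n, ((b : ℝ) - 1) * z ^ (j.1 + 1)) := by
          rw [Real.exp_sum]
      _ ≤ Real.exp (((b : ℝ) - 1) * (z / (1 - z))) := by
          apply Real.exp_le_exp.mpr
          rw [← Finset.mul_sum]
          apply mul_le_mul_of_nonneg_left _ (by linarith : (0:ℝ) ≤ (b : ℝ) - 1)
          have hgeom : ∑ j : Fin n, z ^ (j.1 + 1) = z * ∑ j ∈ Finset.range n, z ^ j := by
            rw [Finset.mul_sum, ← Fin.sum_univ_eq_sum_range (fun j => z * z ^ j)]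
            apply Finset.sum_congr rfl
            intro j _
            rw [pow_succ, mul_comm]
          rw [hgeom]
          have h1z : (0:ℝ) < 1 - z := by linarith
          have hsum : ∑ j ∈ Finset.range n, z ^ j ≤ (1 - z)⁻¹ := by
            rw [geom_sum_eq (ne_of_lt hz1) n]
            have key : (z ^ n - 1) / (z - 1) = (1 - z ^ n) / (1 - z) := by
              rw [div_eq_div_iff (by linarith) (by linarith)]
              ring
            rw [key, div_le_iff₀ h1z]
            have hzn : (0:ℝ) ≤ z ^ n := pow_nonneg hz0 n
            have : (1 - z)⁻¹ * (1 - z) = 1 := inv_mul_cancel₀ (ne_of_gt h1z)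
            nlinarith [mul_pos (inv_pos.mpr h1z) h1z]
          calc z * ∑ j ∈ Finset.range n, z ^ j ≤ z * (1 - z)⁻¹ :=
                mul_le_mul_of_nonneg_left hsum hz0
            _ = z / (1 - z) := (div_eq_mul_inv z (1-z)).symm
  calc (∏ j : Fin n, (1 + ((b : ℝ) - 1) * z ^ (j.1 + 1))) ^ s
      ≤ (Real.exp (((b : ℝ) - 1) * (z / (1 - z)))) ^ s :=
        pow_le_pow_left₀ (Finset.prod_nonneg fun j _ => hfac_nonneg j) hprod s
    _ = Real.exp (((b : ℝ) - 1) * (s : ℝ) * (z / (1 - z))) := by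
        rw [← Real.exp_nat_mul]
        congr 1
        ring

/-- **Existence of low-WAFOM point sets.** Let `G` be a finite abelian group with
`b` elements, `p_b` the smallest prime factor of `b`, `α_b = (log p_b)/2`, and
`c > 0`. For all positive integers `s`, `n`, `d` with
`d ≥ (1+c)(b-1)s/(α_b log b)`, there is a subgroup `P ⊆ G^{s×n}` with `|P| ≤ b^d`
such that
`WAFOM(P) ≤ (1 + ((1+c)/c)(1/log b)) · b^{-α_b² d²/((b-1)s)} · e^{2 α_b d}`. -/
theorem exists_low_wafom_subgroup (G : Type*) [AddCommGroup G] [Fintype G]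
    (b s n d : ℕ) (hb : b = Fintype.card G) (hb2 : 2 ≤ b) (hs : 0 < s) (hn : 0 < n)
    (hd : 0 < d) (c : ℝ) (hc : 0 < c)
    (hds : (1 + c) * ((b : ℝ) - 1) * s / (Real.log b.minFac / 2 * Real.log b) ≤ d) :
    ∃ P : AddSubgroup (Fin s → Fin n → G), Nat.card P ≤ b ^ d ∧
      (∑ᶠ A ∈ {A : Fin s → Fin n → AddChar G ℂ |
          (∀ B ∈ P, (∏ i : Fin s, ∏ j : Fin n, A i j (B i j)) = 1) ∧
            A ≠ fun _ _ => 1},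
        ((b : ℝ) ^ dickWeight A)⁻¹) ≤
      (1 + (1 + c) / c * (1 / Real.log b)) *
        (b : ℝ) ^ (-((Real.log b.minFac / 2) ^ 2 * d ^ 2 / (((b : ℝ) - 1) * s))) *
        Real.exp (2 * (Real.log b.minFac / 2) * d) := by
  classical
  subst hb
  set b := Fintype.card G with hbdef
  -- abbreviations
  set p := b.minFac with hpdef
  set α : ℝ := Real.log p / 2 with hα
  set L : ℝ := Real.log b with hL
  set Wr : ℝ := ((b : ℝ) - 1) * s with hWr
  set mstar : ℝ := α ^ 2 * d ^ 2 / Wr with hmstar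
  set M : ℕ := ⌊mstar⌋₊ with hM
  -- basic positivity facts
  have hp2 : 2 ≤ p := (Nat.minFac_prime (by omega)).two_le
  have hpb : p ≤ b := Nat.minFac_le (by omega)
  have hbR : (2 : ℝ) ≤ (b : ℝ) := by exact_mod_cast hb2
  have hbpos : (0:ℝ) < (b:ℝ) := by linarith
  have hppos : (0:ℝ) < (p:ℝ) := by
    have : (0:ℕ) < p := by omega
    exact_mod_cast this
  have hLpos : 0 < L := Real.log_pos (by exact_mod_cast hb2)
  have hαpos : 0 < α := by
    have h1 : (1:ℝ) < p := by exact_mod_cast hp2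
    have := Real.log_pos h1
    rw [hα]; linarith
  have h2α : 2 * α = Real.log p := by rw [hα]; ring
  have hsR : (1 : ℝ) ≤ (s : ℝ) := by exact_mod_cast hs
  have hdR : (1 : ℝ) ≤ (d : ℝ) := by exact_mod_cast hd
  have hWrpos : (0 : ℝ) < Wr := by
    have : (1:ℝ) ≤ (b:ℝ) - 1 := by linarith
    rw [hWr]; nlinarith
  have hds' : (1 + c) * Wr ≤ α * L * (d : ℝ) := by
    rw [div_le_iff₀ (by positivity)] at hds
    calc (1+c) * Wr = (1 + c) * ((b : ℝ) - 1) * s := by rw [hWr]; ring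
      _ ≤ (d : ℝ) * (α * L) := hds
      _ = α * L * d := by ring
  set lam : ℝ := Wr / (α * d) with hlam
  have hlampos : 0 < lam := by positivity
  have hlamL : lam < L := by
    rw [hlam, div_lt_iff₀ (by positivity)]
    nlinarith
  have hlam_mstar : lam * mstar = α * d := by
    rw [hlam, hmstar]
    field_simp
  have hmstar_nonneg : 0 ≤ mstar := by positivity
  have hMle : (M : ℝ) ≤ mstar := Nat.floor_le hmstar_nonneg
  have hMge : mstar ≤ (M : ℝ) + 1 := (Nat.lt_floor_add_one mstar).le
  set z : ℝ := Real.exp (-lam) with hz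
  have hz0 : 0 < z := Real.exp_pos _
  have hz1 : z < 1 := by
    rw [hz, Real.exp_lt_one_iff]; linarith
  -- the partition-function bound
  have hSig : ∑ A : Fin s → Fin n → AddChar G ℂ, z ^ (dickWeight A) ≤ Real.exp (α * d) := by
    refine le_trans (sum_z_pow_dickWeight z hz0.le hz1) ?_
    rw [Real.exp_le_exp]
    have hkey : z / (1 - z) ≤ 1 / lam := by
      rw [div_le_div_iff₀ (by linarith) hlampos]
      have := Real.add_one_le_exp lam
      have hzv : z * Real.exp lam = 1 := by
        rw [hz, ← Real.exp_add]; simp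
      nlinarith
    calc ((b:ℝ) - 1) * s * (z / (1 - z)) ≤ Wr * (1 / lam) := by
          apply mul_le_mul_of_nonneg_left hkey (le_of_lt hWrpos)
      _ = α * d := by
          rw [hlam]
          field_simp
  have hzpow : ∀ w : ℕ, z ^ w = Real.exp (-(lam * w)) := by
    intro w
    rw [hz, ← Real.exp_nat_mul]
    congr 1
    ring
  -- the bad set and its cardinality
  set Bad : Finset (Fin s → Fin n → AddChar G ℂ) := Finset.univ.filter
    (fun A => A ≠ (fun _ _ => 1) ∧ dickWeight A ≤ M) with hBad
  have hdW1 : dickWeight (fun _ _ => (1 : AddChar G ℂ) : Fin s → Fin n → AddChar G ℂ) = 0 := by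
    simp [dickWeight]
 
  have hBadcard : (Bad.card : ℝ) < (p:ℝ) ^ d := by
    have h1 : (Bad.card : ℝ) * z ^ M ≤ ∑ A ∈ Bad, z ^ (dickWeight A) := by
      calc (Bad.card : ℝ) * z ^ M = ∑ _A ∈ Bad, z ^ M := by
            rw [Finset.sum_const, nsmul_eq_mul]
        _ ≤ ∑ A ∈ Bad, z ^ (dickWeight A) :=
            Finset.sum_le_sum (fun A hA =>
              pow_le_pow_of_le_one hz0.le hz1.le (Finset.mem_filter.mp hA).2.2)
    have h2 : ∑ A ∈ Bad, z ^ (dickWeight A) ≤ Real.exp (α*d) - 1 := by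
      have hsub : Bad ⊆ Finset.univ.erase (fun _ _ => (1 : AddChar G ℂ)) := by
        intro A hA
        rw [Finset.mem_erase]
        exact ⟨(Finset.mem_filter.mp hA).2.1, Finset.mem_univ _⟩
      calc ∑ A ∈ Bad, z ^ (dickWeight A)
          ≤ ∑ A ∈ Finset.univ.erase (fun _ _ => (1:AddChar G ℂ)), z ^ (dickWeight A) :=
            Finset.sum_le_sum_of_subset_of_nonneg hsub (fun A _ _ => pow_nonneg hz0.le _)
        _ = (∑ A : Fin s → Fin n → AddChar G ℂ, z ^ (dickWeight A))
              - z ^ (dickWeight (fun _ _ => (1:AddChar G ℂ))) :=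
            Finset.sum_erase_eq_sub (Finset.mem_univ _)
        _ ≤ Real.exp (α*d) - 1 := by rw [hdW1, pow_zero]; linarith [hSig]
    have hαd0 : 0 ≤ α * d := by positivity
    have hzM : Real.exp (-(α*d)) ≤ z ^ M := by
      rw [hzpow M, Real.exp_le_exp]
      have h4 : lam * M ≤ lam * mstar := mul_le_mul_of_nonneg_left hMle hlampos.le
      rw [hlam_mstar] at h4
      linarith
    have hzMpos : 0 < z ^ M := pow_pos hz0 M
    have he1 : 0 ≤ Real.exp (α*d) - 1 := by
      have := Real.add_one_le_exp (α*d); linarith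
    have hcard1 : (Bad.card : ℝ) ≤ (Real.exp (α*d) - 1) * Real.exp (α*d) := by
      have h5 := le_trans h1 h2
      rw [← le_div_iff₀ hzMpos] at h5
      refine le_trans h5 ?_
      have h3 : 1 ≤ Real.exp (α*d) * z ^ M := by
        have h6 := mul_le_mul_of_nonneg_left hzM (Real.exp_pos (α*d)).le
        rw [← Real.exp_add] at h6
        simpa using h6
      rw [div_le_iff₀ hzMpos]
      calc Real.exp (α*d) - 1 = (Real.exp (α*d) - 1) * 1 := (mul_one _).symm
        _ ≤ (Real.exp (α*d) - 1) * (Real.exp (α*d) * z ^ M) :=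
            mul_le_mul_of_nonneg_left h3 he1
        _ = (Real.exp (α*d) - 1) * Real.exp (α*d) * z ^ M := by ring
    calc (Bad.card : ℝ) ≤ (Real.exp (α*d) - 1) * Real.exp (α*d) := hcard1
      _ < Real.exp (α*d) * Real.exp (α*d) :=
          mul_lt_mul_of_pos_right (sub_lt_self _ one_pos) (Real.exp_pos _)
      _ = Real.exp (2*α*d) := by rw [← Real.exp_add]; congr 1; ring
      _ = (p:ℝ) ^ d := by
          have h7 : 2*α*(d:ℝ) = (d:ℝ) * Real.log p := by rw [← h2α]; ring
          rw [h7, Real.exp_nat_mul, Real.exp_log hppos]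
  have hBadNat : Bad.card + 1 ≤ p ^ d := by
    have h8 : (Bad.card : ℝ) < ((p ^ d : ℕ) : ℝ) := by push_cast; exact hBadcard
    have h9 : Bad.card < p ^ d := Nat.cast_lt.mp h8
    omega
  obtain ⟨m, hm⟩ := good_m_exists Bad (fun A hA => (Finset.mem_filter.mp hA).2.1) hBadNat
  -- the subgroup
  set ψ : (Fin d → G) →+ (Fin s → Fin n → G) := AddMonoidHom.mk'
    (fun u i j => ∑ k, ((m k i j : ℕ) • u k))
    (by
      intro u v
      funext i j
      simp [smul_add, Finset.sum_add_distrib]) with hψ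
  refine ⟨ψ.range, ?_, ?_⟩
  · -- cardinality bound
    calc Nat.card ψ.range ≤ Nat.card (Fin d → G) :=
          Nat.card_le_card_of_surjective ψ.rangeRestrict ψ.rangeRestrict_surjective
      _ = b ^ d := by
          rw [Nat.card_eq_fintype_card, Fintype.card_fun, Fintype.card_fin]
  · -- the WAFOM bound
    set S : Set (Fin s → Fin n → AddChar G ℂ) :=
      {A | (∀ B ∈ ψ.range, (∏ i : Fin s, ∏ j : Fin n, A i j (B i j)) = 1) ∧
        A ≠ fun _ _ => 1} with hS
    have hSfin : S.Finite := Set.toFinite S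
    set Tail : Finset (Fin s → Fin n → AddChar G ℂ) :=
      Finset.univ.filter (fun A => M + 1 ≤ dickWeight A) with hTail
    have hsub : hSfin.toFinset ⊆ Tail := by
      intro A hA
      rw [Set.Finite.mem_toFinset] at hA
      obtain ⟨hann, hA1⟩ := hA
      rw [hTail, Finset.mem_filter]
      refine ⟨Finset.mem_univ _, ?_⟩
      by_contra hlow
      have hdWA : dickWeight A ≤ M := by omega
      have hABad : A ∈ Bad := by
        rw [hBad, Finset.mem_filter]
        exact ⟨Finset.mem_univ _, hA1, hdWA⟩
      apply hm A hABad
      intro k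
      ext a
      rw [AddChar.one_apply]
      have hψs : ∀ i j, ψ (Pi.single k a) i j = (m k i j : ℕ) • a := by
        intro i j
        show ∑ k', ((m k' i j : ℕ) • Pi.single k a k') = (m k i j : ℕ) • a
        rw [Finset.sum_eq_single k]
        · rw [Pi.single_eq_same]
        · intro k' _ hk'
          rw [Pi.single_eq_of_ne hk', smul_zero]
        · intro h
          exact absurd (Finset.mem_univ k) h
      have hB := hann (ψ (Pi.single k a)) ⟨Pi.single k a, rfl⟩
      simp only [hψs, AddChar.map_nsmul_eq_pow] at hB
      rw [AddChar.prod_apply]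
      calc ∏ i, (∏ j, (A i j) ^ ((m k i j : ℕ))) a
          = ∏ i, ∏ j, ((A i j) a) ^ ((m k i j : ℕ)) := by
            apply Finset.prod_congr rfl
            intro i _
            rw [AddChar.prod_apply]
            apply Finset.prod_congr rfl
            intro j _
            rw [AddChar.pow_apply]
        _ = 1 := hB
    -- convert the finsum and bound it
    rw [finsum_mem_eq_finite_toFinset_sum _ hSfin]
    have hstep : ∑ A ∈ hSfin.toFinset, ((b : ℝ) ^ dickWeight A)⁻¹ ≤
        ∑ A ∈ Tail, ((b : ℝ) ^ dickWeight A)⁻¹ := by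
      apply Finset.sum_le_sum_of_subset_of_nonneg hsub
      intro A _ _
      positivity
    refine le_trans hstep ?_
    -- per-element tail bound
    have hperA : ∀ A ∈ Tail, ((b : ℝ) ^ dickWeight A)⁻¹ ≤
        Real.exp (-((L - lam) * ((M:ℝ) + 1))) * z ^ (dickWeight A) := by
      intro A hA
      rw [hTail, Finset.mem_filter] at hA
      have hwA : (M : ℝ) + 1 ≤ (dickWeight A : ℝ) := by exact_mod_cast hA.2
      have hbw : ((b : ℝ) ^ dickWeight A)⁻¹ = Real.exp (-(L * (dickWeight A : ℝ))) := by
        calc ((b : ℝ) ^ dickWeight A)⁻¹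
            = (Real.exp (Real.log b) ^ dickWeight A)⁻¹ := by rw [Real.exp_log hbpos]
          _ = (Real.exp ((dickWeight A : ℝ) * Real.log b))⁻¹ := by rw [Real.exp_nat_mul]
          _ = Real.exp (-(L * (dickWeight A : ℝ))) := by
              rw [← Real.exp_neg]
              congr 1
              rw [hL]
              ring
      rw [hbw, hzpow, ← Real.exp_add, Real.exp_le_exp]
      have : (L - lam) * ((M:ℝ)+1) ≤ (L - lam) * (dickWeight A : ℝ) :=
        mul_le_mul_of_nonneg_left hwA (by linarith)
      linarith
    calc ∑ A ∈ Tail, ((b : ℝ) ^ dickWeight A)⁻¹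
        ≤ ∑ A ∈ Tail, Real.exp (-((L - lam) * ((M:ℝ) + 1))) * z ^ (dickWeight A) :=
          Finset.sum_le_sum hperA
      _ = Real.exp (-((L - lam) * ((M:ℝ) + 1))) * ∑ A ∈ Tail, z ^ (dickWeight A) := by
          rw [Finset.mul_sum]
      _ ≤ Real.exp (-((L - lam) * ((M:ℝ) + 1))) * Real.exp (α * d) := by
          apply mul_le_mul_of_nonneg_left _ (Real.exp_pos _).le
          refine le_trans ?_ hSig
          apply Finset.sum_le_sum_of_subset_of_nonneg (Finset.subset_univ _)
          intro A _ _
          exact pow_nonneg hz0.le _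
      _ ≤ Real.exp (-((L - lam) * mstar)) * Real.exp (α * d) := by
          apply mul_le_mul_of_nonneg_right _ (Real.exp_pos _).le
          rw [Real.exp_le_exp]
          have : (L - lam) * mstar ≤ (L - lam) * ((M:ℝ)+1) :=
            mul_le_mul_of_nonneg_left hMge (by linarith)
          linarith
      _ = (b:ℝ) ^ (-mstar) * Real.exp (2 * α * d) := by
          rw [← Real.exp_add, Real.rpow_def_of_pos hbpos, ← Real.exp_add]
          congr 1
          rw [← hL]
          linarith [hlam_mstar]
      _ ≤ (1 + (1 + c) / c * (1 / L)) * ((b:ℝ) ^ (-mstar) * Real.exp (2 * α * d)) := by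
          have hpos : 0 < (b:ℝ) ^ (-mstar) * Real.exp (2 * α * d) := by positivity
          nlinarith [div_pos (by linarith : (0:ℝ) < 1 + c) hc, one_div_pos.mpr hLpos,
            mul_pos (div_pos (by linarith : (0:ℝ) < 1 + c) hc) (one_div_pos.mpr hLpos)]
      _ = (1 + (1 + c) / c * (1 / L)) * (b:ℝ) ^ (-mstar) * Real.exp (2 * α * d) := by
          ring
end
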